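/- arXiv:1101.0823 — 5 statements merged into one kernel-verified Lean document; each statement's English description precedes it below -/
import Mathlib

section
/- Let n ≥ 4 and let A₁ ≥ A₂ ≥ … ≥ Aₙ > 0 be real numbers. Then there exist vectors v₁, …, vₙ in ℝ³ with ‖vᵢ‖ = Aᵢ for all i that are fully equilibrated in ℝ³ (i.e., they sum to zero, no two of them are positively proportional, and they span ℝ³) if and only if A₁ < A₂ + A₃ + … + Aₙ. -/
open RealInnerProductSpace

noncomputable section

def PosProportional {V : Type*} [AddCommGroup V] [Module ℝ V] (u v : V) : Prop :=
  ∃ c : ℝ, 0 < c ∧ u = c • v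

local notation "E3" => EuclideanSpace ℝ (Fin 3)

lemma not_posProp_of_inner (x y p : E3) (hx : 0 < ⟪x, p⟫) (hy : ⟪y, p⟫ ≤ 0) :
    ¬ PosProportional x y := by
  rintro ⟨c, hc, rfl⟩
  rw [real_inner_smul_left] at hx
  nlinarith

/-- Split a nonzero vector `w` into two vectors of prescribed norms `a`, `b`
satisfying the strict triangle inequalities, bending in the direction `p ⊥ w`. -/
lemma split_lemma (w : E3) (a b : ℝ) (ha : 0 < a) (hb : 0 < b)
    (h1 : ‖w‖ < a + b) (h2 : a < b + ‖w‖) (h3 : b < a + ‖w‖)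
    :
    ∃ γ β : ℝ, 0 < β ∧ ∀ p : E3, ‖p‖ = 1 → ⟪p, w⟫ = 0 →
      ‖γ • w + β • p‖ = a ∧ ‖(1 - γ) • w - β • p‖ = b := by
  have hw : 0 < ‖w‖ := by nlinarith [norm_nonneg w]
  set r := ‖w‖ with hr
  set α : ℝ := (r ^ 2 + a ^ 2 - b ^ 2) / (2 * r) with hα
  have hβ2 : 0 < a ^ 2 - α ^ 2 := by
    have key : a ^ 2 - α ^ 2 = ((a + b - r) * (a - b + r) * (b - a + r) * (a + b + r)) / (2 * r) ^ 2 := by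
      rw [hα]; field_simp
      ring
    rw [key]
    have h4 : (0:ℝ) < a + b - r := by linarith
    have h5 : (0:ℝ) < a - b + r := by linarith
    have h6 : (0:ℝ) < b - a + r := by linarith
    have h7 : (0:ℝ) < a + b + r := by linarith
    exact div_pos (by positivity) (by positivity)
  set β : ℝ := Real.sqrt (a ^ 2 - α ^ 2) with hβ
  have hβpos : 0 < β := Real.sqrt_pos.2 hβ2
  have hβsq : β ^ 2 = a ^ 2 - α ^ 2 := Real.sq_sqrt hβ2.le
  refine ⟨α / r, β, hβpos, fun p hp hpw => ⟨?_, ?_⟩⟩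
  · have hx : ‖(α / r) • w + β • p‖ ^ 2 = a ^ 2 := by
      rw [norm_add_sq_real, norm_smul, norm_smul, real_inner_smul_left, real_inner_smul_right,
        real_inner_comm p w, hpw, hp, mul_pow, mul_pow, Real.norm_eq_abs, Real.norm_eq_abs, sq_abs, sq_abs, ← hr]
      have hα' : α * (2 * r) = r ^ 2 + a ^ 2 - b ^ 2 := by rw [hα]; field_simp
      field_simp
      nlinarith [hβsq, hα']
    rw [← Real.sqrt_sq (norm_nonneg _), hx, Real.sqrt_sq ha.le]
  · have hy : ‖(1 - α / r) • w - β • p‖ ^ 2 = b ^ 2 := by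
      rw [norm_sub_sq_real, norm_smul, norm_smul, real_inner_smul_left, real_inner_smul_right,
        real_inner_comm p w, hpw, hp, mul_pow, mul_pow, Real.norm_eq_abs, Real.norm_eq_abs, sq_abs, sq_abs, ← hr]
      have hα' : α * (2 * r) = r ^ 2 + a ^ 2 - b ^ 2 := by rw [hα]; field_simp
      field_simp
      nlinarith [hβsq, hα']
    rw [← Real.sqrt_sq (norm_nonneg _), hy, Real.sqrt_sq hb.le]


lemma circle_infinite (w : E3) (hw : w ≠ 0) :
    {p : E3 | ‖p‖ = 1 ∧ ⟪p, w⟫ = 0}.Infinite := by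
  have hdim : Module.finrank ℝ E3 = 3 := by simp
  have : Fact (Module.finrank ℝ E3 = 2 + 1) := ⟨by simp⟩
  have h2 : Module.finrank ℝ ((Submodule.span ℝ {w})ᗮ) = 2 :=
    Submodule.finrank_orthogonal_span_singleton hw
  set W := (Submodule.span ℝ {w})ᗮ
  haveI : FiniteDimensional ℝ W := inferInstance
  let B := stdOrthonormalBasis ℝ W
  have hB := B.orthonormal
  let i0 : Fin (Module.finrank ℝ W) := ⟨0, by rw [h2]; norm_num⟩
  let i1 : Fin (Module.finrank ℝ W) := ⟨1, by rw [h2]; norm_num⟩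
  let e : Fin 2 → E3 := fun i => if i = 0 then (B i0 : E3) else (B i1 : E3)
  have he0 : e 0 = (B i0 : E3) := rfl
  have he1 : e 1 = (B i1 : E3) := rfl
  have hn : ∀ i : Fin 2, ‖e i‖ = 1 := by
    intro i
    fin_cases i
    · show ‖e 0‖ = 1
      rw [he0, Submodule.norm_coe]; exact hB.1 i0
    · show ‖e 1‖ = 1
      rw [he1, Submodule.norm_coe]; exact hB.1 i1
  have heW : ∀ i, (e i) ∈ W := by
    intro i
    fin_cases i
    · show e 0 ∈ W
      rw [he0]; exact (B i0).2
    · show e 1 ∈ W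
      rw [he1]; exact (B i1).2
  have heperp : ∀ i, ⟪e i, w⟫ = 0 := by
    intro i
    refine (Submodule.mem_orthogonal W w).mp ?_ (e i) (heW i)
    rw [Submodule.orthogonal_orthogonal]
    exact Submodule.mem_span_singleton_self w
  have h01 : ⟪e 0, e 1⟫ = 0 := by
    rw [he0, he1, ← Submodule.coe_inner]
    exact hB.2 (by simp [i0, i1, Fin.ext_iff])
  let f : ℝ → E3 := fun t => Real.cos t • e 0 + Real.sin t • e 1
  have hmem : ∀ t, f t ∈ {p : E3 | ‖p‖ = 1 ∧ ⟪p, w⟫ = 0} := by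
    intro t
    constructor
    · have : ‖f t‖ ^ 2 = 1 := by
        rw [show f t = Real.cos t • e 0 + Real.sin t • e 1 from rfl, norm_add_sq_real,
          norm_smul, norm_smul, real_inner_smul_left, real_inner_smul_right, h01, hn, hn,
          Real.norm_eq_abs, Real.norm_eq_abs, mul_pow, mul_pow, sq_abs, sq_abs]
        nlinarith [Real.sin_sq_add_cos_sq t]
      nlinarith [norm_nonneg (f t)]
    · show ⟪f t, w⟫ = 0
      rw [show f t = Real.cos t • e 0 + Real.sin t • e 1 from rfl, inner_add_left,
        real_inner_smul_left, real_inner_smul_left, heperp, heperp]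
      ring
  have hinj : Set.InjOn f (Set.Ico 0 Real.pi) := by
    intro s hs t ht hst
    have hcs : ⟪f s, e 0⟫ = Real.cos s := by
      show ⟪Real.cos s • e 0 + Real.sin s • e 1, e 0⟫ = _
      rw [inner_add_left, real_inner_smul_left, real_inner_smul_left,
        real_inner_comm (e 0) (e 1)] at *
      rw [h01, real_inner_self_eq_norm_sq, hn]
      ring
    have hct : ⟪f t, e 0⟫ = Real.cos t := by
      show ⟪Real.cos t • e 0 + Real.sin t • e 1, e 0⟫ = _
      rw [inner_add_left, real_inner_smul_left, real_inner_smul_left,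
        real_inner_comm (e 0) (e 1)] at *
      rw [h01, real_inner_self_eq_norm_sq, hn]
      ring
    have : Real.cos s = Real.cos t := by rw [← hcs, ← hct, hst]
    exact Real.injOn_cos (Set.mem_Icc_of_Ico hs) (Set.mem_Icc_of_Ico ht) this
  have hIco : (Set.Ico (0:ℝ) Real.pi).Infinite :=
    Set.infinite_coe_iff.mp (Set.Ico.infinite Real.pi_pos)
  exact ((hIco.image hinj).mono (by rintro x ⟨t, _, rfl⟩; exact hmem t))

lemma bad_subsingleton (w u : E3) (hw : w ≠ 0) (hu : u ≠ 0) (γ β : ℝ) (hβ : β ≠ 0) :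
    {p : E3 | ‖p‖ = 1 ∧ ⟪p, w⟫ = 0 ∧ ∃ c : ℝ, 0 < c ∧ γ • w + β • p = c • u}.Subsingleton := by
  rintro p₁ ⟨hp₁, hpw₁, c₁, hc₁, he₁⟩ p₂ ⟨hp₂, hpw₂, c₂, hc₂, he₂⟩
  by_cases huw : ⟪u, w⟫ = 0
  · -- then γ * ‖w‖^2 = 0 so γ = 0, and p_k = (c_k/β) • u with norm 1
    have hγ : γ = 0 := by
      have h : ⟪γ • w + β • p₁, w⟫ = ⟪c₁ • u, w⟫ := by rw [he₁]
      rw [inner_add_left, real_inner_smul_left, real_inner_smul_left,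
        real_inner_smul_left, hpw₁, huw] at h
      have hw2 : ⟪w, w⟫ ≠ (0:ℝ) := by
        rw [real_inner_self_eq_norm_sq]
        exact pow_ne_zero 2 (norm_ne_zero_iff.2 hw)
      have h' : γ * ⟪w, w⟫ = 0 := by linarith
      rcases mul_eq_zero.mp h' with h'' | h''
      · exact h''
      · exact absurd h'' hw2
    subst hγ
    simp only [zero_smul, zero_add] at he₁ he₂
    have hk : ∀ (p : E3) (c : ℝ), 0 < c → ‖p‖ = 1 → β • p = c • u → c = |β| / ‖u‖ := by
      intro p c hc hp he
      have := congrArg norm he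
      rw [norm_smul, norm_smul, hp, Real.norm_eq_abs, Real.norm_eq_abs, mul_one,
        abs_of_pos hc] at this
      field_simp [norm_ne_zero_iff.2 hu]
      linarith [this]
    have h1 := hk p₁ c₁ hc₁ hp₁ he₁
    have h2 := hk p₂ c₂ hc₂ hp₂ he₂
    have : β • p₁ = β • p₂ := by rw [he₁, he₂, h1, h2]
    exact smul_right_injective _ hβ this
  · have hdiff : β • p₁ - β • p₂ = (c₁ - c₂) • u := by
      have h := congrArg₂ (fun (x y : E3) => x - y) he₁ he₂
      simp only [sub_smul] at h ⊢
      rw [← h]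
      abel
    have hinner : (c₁ - c₂) * ⟪u, w⟫ = 0 := by
      have h : ⟪β • p₁ - β • p₂, w⟫ = ⟪(c₁ - c₂) • u, w⟫ := by rw [hdiff]
      rw [inner_sub_left, real_inner_smul_left, real_inner_smul_left,
        real_inner_smul_left, hpw₁, hpw₂] at h
      linarith
    have hc : c₁ = c₂ := by
      rcases mul_eq_zero.mp hinner with h' | h'
      · linarith
      · exact absurd h' huw
    have : β • p₁ = β • p₂ := by
      have := he₁.trans (hc ▸ he₂.symm)
      exact add_left_cancel this
    exact smul_right_injective _ hβ this

lemma not_posProp_of_inner' (x y p : E3) (hx : 0 < ⟪x, p⟫) (hy : ⟪y, p⟫ ≤ 0) :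
    ¬ PosProportional y x := by
  rintro ⟨c, hc, rfl⟩
  rw [real_inner_smul_left] at hy
  nlinarith

lemma not_posProp_of_perp (x u p : E3) (hx : ⟪x, p⟫ ≠ 0) (hu : ⟪u, p⟫ = 0) :
    ¬ PosProportional x u ∧ ¬ PosProportional u x := by
  constructor
  · rintro ⟨c, hc, rfl⟩
    rw [real_inner_smul_left, hu, mul_zero] at hx
    exact hx rfl
  · rintro ⟨c, hc, he⟩
    rw [he, real_inner_smul_left] at hu
    rcases mul_eq_zero.mp hu with h | h
    · exact hc.ne' h
    · exact hx h

def vec (x y z : ℝ) : E3 := (WithLp.equiv 2 (Fin 3 → ℝ)).symm ![x, y, z]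

@[simp] lemma vec_apply_0 (x y z : ℝ) : vec x y z 0 = x := rfl
@[simp] lemma vec_apply_1 (x y z : ℝ) : vec x y z 1 = y := rfl
@[simp] lemma vec_apply_2 (x y z : ℝ) : vec x y z 2 = z := rfl

lemma vec_norm (x y z : ℝ) : ‖vec x y z‖ = Real.sqrt (x ^ 2 + y ^ 2 + z ^ 2) := by
  rw [EuclideanSpace.norm_eq]
  congr 1
  rw [Fin.sum_univ_three]
  simp [Real.norm_eq_abs, sq_abs]

lemma vec_inner (x y z x' y' z' : ℝ) :
    ⟪vec x y z, vec x' y' z'⟫ = x * x' + y * y' + z * z' := by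
  rw [PiLp.inner_apply, Fin.sum_univ_three]
  simp [RCLike.inner_apply, mul_comm]

lemma vec_add (x y z x' y' z' : ℝ) :
    vec x y z + vec x' y' z' = vec (x + x') (y + y') (z + z') := by
  ext i
  fin_cases i <;> rfl

lemma vec_zero : vec 0 0 0 = 0 := by ext i; fin_cases i <;> rfl

set_option maxHeartbeats 2000000 in
lemma base4 (a : Fin 4 → ℝ) (hpos : ∀ i, 0 < a i) (h : ∀ j, 2 * a j < ∑ i, a i) :
    ∃ v : Fin 4 → E3, (∀ i, ‖v i‖ = a i) ∧ (∑ i, v i) = 0 ∧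
      (∀ i j, i ≠ j → ¬ PosProportional (v i) (v j)) ∧
      Submodule.span ℝ (Set.range v) = ⊤ := by
  have hS : ∑ i, a i = a 0 + a 1 + a 2 + a 3 := Fin.sum_univ_four a
  have h0 := h 0; have h1 := h 1; have h2 := h 2; have h3 := h 3
  rw [hS] at h0 h1 h2 h3
  have hp0 := hpos 0; have hp1 := hpos 1; have hp2 := hpos 2; have hp3 := hpos 3
  set L : ℝ := max (max (a 0 - a 1) (a 1 - a 0)) (max (a 2 - a 3) (a 3 - a 2)) with hLdef
  set U : ℝ := min (a 0 + a 1) (a 2 + a 3) with hUdef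
  set B : ℝ := (L + U) / 2 with hBdef
  have hb1 : a 0 - a 1 ≤ L := le_max_of_le_left (le_max_left _ _)
  have hb2 : a 1 - a 0 ≤ L := le_max_of_le_left (le_max_right _ _)
  have hb3 : a 2 - a 3 ≤ L := le_max_of_le_right (le_max_left _ _)
  have hb4 : a 3 - a 2 ≤ L := le_max_of_le_right (le_max_right _ _)
  have hL0 : 0 ≤ L := by linarith
  have hu1 : U ≤ a 0 + a 1 := min_le_left _ _
  have hu2 : U ≤ a 2 + a 3 := min_le_right _ _
  have hLU : L < U :=
    max_lt (max_lt (lt_min (by linarith) (by linarith)) (lt_min (by linarith) (by linarith)))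
      (max_lt (lt_min (by linarith) (by linarith)) (lt_min (by linarith) (by linarith)))
  have hBpos : 0 < B := by rw [hBdef]; linarith
  have hBu1 : B < a 0 + a 1 := by rw [hBdef]; linarith
  have hBu2 : B < a 2 + a 3 := by rw [hBdef]; linarith
  have hBl1 : a 0 - a 1 < B := by rw [hBdef]; linarith
  have hBl2 : a 1 - a 0 < B := by rw [hBdef]; linarith
  have hBl3 : a 2 - a 3 < B := by rw [hBdef]; linarith
  have hBl4 : a 3 - a 2 < B := by rw [hBdef]; linarith
  -- the triangle with sides a0, a1, B
  set u : ℝ := (B ^ 2 - a 0 ^ 2 - a 1 ^ 2) / (2 * a 0) with hudef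
  have hu' : u * (2 * a 0) = B ^ 2 - a 0 ^ 2 - a 1 ^ 2 := by
    rw [hudef]; field_simp
  have hvv2 : 0 < a 1 ^ 2 - u ^ 2 := by
    have key : a 1 ^ 2 - u ^ 2 =
        ((a 0 + a 1 - B) * (a 0 + a 1 + B) * (B - a 0 + a 1) * (B + a 0 - a 1)) / (2 * a 0) ^ 2 := by
      rw [hudef]; field_simp; ring
    rw [key]
    have f1 : (0:ℝ) < a 0 + a 1 - B := by linarith
    have f2 : (0:ℝ) < a 0 + a 1 + B := by linarith
    have f3 : (0:ℝ) < B - a 0 + a 1 := by linarith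
    have f4 : (0:ℝ) < B + a 0 - a 1 := by linarith
    exact div_pos (by positivity) (by positivity)
  set vv : ℝ := Real.sqrt (a 1 ^ 2 - u ^ 2) with hvvdef
  have hvv : 0 < vv := Real.sqrt_pos.2 hvv2
  have hvvsq : vv ^ 2 = a 1 ^ 2 - u ^ 2 := Real.sq_sqrt hvv2.le
  set t0 : E3 := vec (a 0) 0 0 with ht0
  set t1 : E3 := vec u vv 0 with ht1
  set t2 : E3 := vec (-(a 0) - u) (-vv) 0 with ht2
  have hsum3 : t0 + t1 + t2 = 0 := by
    rw [ht0, ht1, ht2, vec_add, vec_add,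
      show a 0 + u + (-(a 0) - u) = (0:ℝ) by ring,
      show (0:ℝ) + vv + -vv = 0 by ring,
      show (0:ℝ) + 0 + 0 = 0 by ring, vec_zero]
  have hn0 : ‖t0‖ = a 0 := by
    rw [ht0, vec_norm, show a 0 ^ 2 + 0 ^ 2 + 0 ^ 2 = a 0 ^ 2 by ring, Real.sqrt_sq hp0.le]
  have hn1 : ‖t1‖ = a 1 := by
    rw [ht1, vec_norm, show u ^ 2 + vv ^ 2 + 0 ^ 2 = a 1 ^ 2 by rw [hvvsq]; ring,
      Real.sqrt_sq hp1.le]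
  have hn2 : ‖t2‖ = B := by
    rw [ht2, vec_norm, show (-(a 0) - u) ^ 2 + (-vv) ^ 2 + 0 ^ 2 = B ^ 2 by linear_combination hvvsq + hu',
      Real.sqrt_sq hBpos.le]
  set p : E3 := vec 0 0 1 with hpdef
  have hp : ‖p‖ = 1 := by
    rw [hpdef, vec_norm, show (0:ℝ) ^ 2 + 0 ^ 2 + 1 ^ 2 = 1 ^ 2 by ring, Real.sqrt_sq one_pos.le]
  have hpt2 : ⟪p, t2⟫ = 0 := by rw [hpdef, ht2, vec_inner]; ring
  obtain ⟨γ, β, hβ, hsplitp⟩ :=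
    split_lemma t2 (a 2) (a 3) hp2 hp3 (by rw [hn2]; linarith) (by rw [hn2]; linarith)
      (by rw [hn2]; linarith)
  obtain ⟨hnx, hny⟩ := hsplitp p hp hpt2
  set x : E3 := γ • t2 + β • p with hx
  set y : E3 := (1 - γ) • t2 - β • p with hy
  have hxy : x + y = t2 := by rw [hx, hy]; module
  -- inner products with p
  have hipp : ⟪p, p⟫ = 1 := by rw [hpdef, vec_inner]; ring
  have hip0 : ⟪t0, p⟫ = 0 := by rw [ht0, hpdef, vec_inner]; ring
  have hip1 : ⟪t1, p⟫ = 0 := by rw [ht1, hpdef, vec_inner]; ring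
  have hip2 : ⟪t2, p⟫ = 0 := by rw [real_inner_comm]; exact hpt2
  have hipx : ⟪x, p⟫ = β := by
    rw [hx, inner_add_left, real_inner_smul_left, real_inner_smul_left, hip2, hipp]; ring
  have hipy : ⟪y, p⟫ = -β := by
    rw [hy, inner_sub_left, real_inner_smul_left, real_inner_smul_left, hip2, hipp]; ring
  refine ⟨![t0, t1, x, y], ?_, ?_, ?_, ?_⟩
  · intro i
    fin_cases i
    · exact hn0
    · exact hn1
    · exact hnx
    · exact hny
  · rw [Fin.sum_univ_four]
    show t0 + t1 + x + y = 0
    rw [add_assoc (t0 + t1), hxy]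
    exact hsum3
  · intro i j hij
    have hperp_x0 := not_posProp_of_perp x t0 p (by rw [hipx]; exact hβ.ne') hip0
    have hperp_x1 := not_posProp_of_perp x t1 p (by rw [hipx]; exact hβ.ne') hip1
    have hperp_y0 := not_posProp_of_perp y t0 p (by rw [hipy]; exact (neg_lt_zero.2 hβ).ne) hip0
    have hperp_y1 := not_posProp_of_perp y t1 p (by rw [hipy]; exact (neg_lt_zero.2 hβ).ne) hip1
    fin_cases i <;> fin_cases j <;>
      first
      | exact absurd rfl hij
      | skip
    · -- t0, t1
      show ¬ PosProportional t0 t1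
      rintro ⟨c, hc, he⟩
      have := congrArg (fun q : E3 => q 1) he
      simp only [ht0, ht1, PiLp.smul_apply, vec_apply_1, smul_eq_mul] at this
      exact (mul_pos hc hvv).ne' this.symm
    · exact hperp_x0.2
    · exact hperp_y0.2
    · -- t1, t0
      show ¬ PosProportional t1 t0
      rintro ⟨c, hc, he⟩
      have := congrArg (fun q : E3 => q 1) he
      simp only [ht0, ht1, PiLp.smul_apply, vec_apply_1, smul_eq_mul, mul_zero] at this
      exact hvv.ne' this
    · exact hperp_x1.2
    · exact hperp_y1.2
    · exact hperp_x0.1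
    · exact hperp_x1.1
    · exact not_posProp_of_inner x y p (by rw [hipx]; exact hβ) (by rw [hipy]; linarith)
    · exact hperp_y0.1
    · exact hperp_y1.1
    · exact not_posProp_of_inner' x y p (by rw [hipx]; exact hβ) (by rw [hipy]; linarith)
  · -- spanning
    have hmem0 : t0 ∈ Submodule.span ℝ (Set.range ![t0, t1, x, y]) :=
      Submodule.subset_span ⟨0, rfl⟩
    have hmem1 : t1 ∈ Submodule.span ℝ (Set.range ![t0, t1, x, y]) :=
      Submodule.subset_span ⟨1, rfl⟩
    have hmemx : x ∈ Submodule.span ℝ (Set.range ![t0, t1, x, y]) :=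
      Submodule.subset_span ⟨2, rfl⟩
    have hmemy : y ∈ Submodule.span ℝ (Set.range ![t0, t1, x, y]) :=
      Submodule.subset_span ⟨3, rfl⟩
    have hmem2 : t2 ∈ Submodule.span ℝ (Set.range ![t0, t1, x, y]) := by
      rw [← hxy]; exact Submodule.add_mem _ hmemx hmemy
    have hpm : p ∈ Submodule.span ℝ (Set.range ![t0, t1, x, y]) := by
      have hpe : p = β⁻¹ • (x - γ • t2) := by
        rw [hx, show γ • t2 + β • p - γ • t2 = β • p by abel, smul_smul,
          inv_mul_cancel₀ hβ.ne', one_smul]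
      rw [hpe]
      exact Submodule.smul_mem _ _ (Submodule.sub_mem _ hmemx (Submodule.smul_mem _ _ hmem2))
    have hs0 : EuclideanSpace.single (0 : Fin 3) (1:ℝ) ∈
        Submodule.span ℝ (Set.range ![t0, t1, x, y]) := by
      have he : EuclideanSpace.single (0 : Fin 3) (1:ℝ) = (a 0)⁻¹ • t0 := by
        rw [ht0]; ext i; fin_cases i <;>
          simp [EuclideanSpace.single_apply, PiLp.smul_apply, hp0.ne']
      rw [he]; exact Submodule.smul_mem _ _ hmem0
    have hs1 : EuclideanSpace.single (1 : Fin 3) (1:ℝ) ∈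
        Submodule.span ℝ (Set.range ![t0, t1, x, y]) := by
      have he : EuclideanSpace.single (1 : Fin 3) (1:ℝ) =
          vv⁻¹ • (t1 - (u * (a 0)⁻¹) • t0) := by
        rw [ht0, ht1]; ext i; fin_cases i <;>
          simp [EuclideanSpace.single_apply, PiLp.smul_apply, PiLp.sub_apply] <;>
          field_simp <;> simp
      rw [he]
      exact Submodule.smul_mem _ _ (Submodule.sub_mem _ hmem1 (Submodule.smul_mem _ _ hmem0))
    have hs2 : EuclideanSpace.single (2 : Fin 3) (1:ℝ) ∈
        Submodule.span ℝ (Set.range ![t0, t1, x, y]) := by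
      have he : EuclideanSpace.single (2 : Fin 3) (1:ℝ) = p := by
        rw [hpdef]; ext i; fin_cases i <;> simp [EuclideanSpace.single_apply]
      rw [he]; exact hpm
    rw [eq_top_iff, ← (EuclideanSpace.basisFun (Fin 3) ℝ).toBasis.span_eq]
    apply Submodule.span_le.mpr
    rintro _ ⟨i, rfl⟩
    rw [OrthonormalBasis.coe_toBasis, EuclideanSpace.basisFun_apply]
    fin_cases i
    · exact hs0
    · exact hs1
    · exact hs2

lemma step_lemma (m : ℕ) (hm : 3 ≤ m)
    (ih : ∀ b : Fin (m + 1) → ℝ, (∀ i, 0 < b i) → (∀ j, 2 * b j < ∑ i, b i) →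
      ∃ v : Fin (m + 1) → E3, (∀ i, ‖v i‖ = b i) ∧ (∑ i, v i) = 0 ∧
        (∀ i j, i ≠ j → ¬ PosProportional (v i) (v j)) ∧
        Submodule.span ℝ (Set.range v) = ⊤)
    (a : Fin (m + 2) → ℝ) (hpos : ∀ i, 0 < a i) (h : ∀ j, 2 * a j < ∑ i, a i) :
    ∃ v : Fin (m + 2) → E3, (∀ i, ‖v i‖ = a i) ∧ (∑ i, v i) = 0 ∧
      (∀ i j, i ≠ j → ¬ PosProportional (v i) (v j)) ∧
      Submodule.span ℝ (Set.range v) = ⊤ := by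
  have hm0 : 0 < m := by omega
  set l1 : Fin (m + 2) := (Fin.last m).castSucc with hl1
  set l2 : Fin (m + 2) := Fin.last (m + 1) with hl2
  set T : ℝ := ∑ i : Fin m, a (i.castSucc.castSucc) with hT
  have hS : ∑ i, a i = T + a l1 + a l2 := by
    rw [Fin.sum_univ_castSucc a, Fin.sum_univ_castSucc (fun i : Fin (m + 1) => a i.castSucc)]
  -- positivity facts about T
  have hTj : ∀ j : Fin m, a (j.castSucc.castSucc) < T := by
    intro j
    rw [hT, ← Finset.sum_erase_add _ _ (Finset.mem_univ j)]
    have hpos' : 0 < ∑ i ∈ Finset.univ.erase j, a (i.castSucc.castSucc) := by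
      apply Finset.sum_pos (fun i _ => hpos _)
      rw [← Finset.card_pos, Finset.card_erase_of_mem (Finset.mem_univ j), Finset.card_univ,
        Fintype.card_fin]
      omega
    linarith
  have hTpos : 0 < T := by
    have j0 : Fin m := ⟨0, hm0⟩
    linarith [hTj j0, hpos (j0.castSucc.castSucc)]
  -- choose B
  have hne : (Finset.univ : Finset (Fin m)).Nonempty := ⟨⟨0, hm0⟩, Finset.mem_univ _⟩
  set L : ℝ := max (max (Finset.univ.sup' hne (fun j : Fin m => 2 * a (j.castSucc.castSucc) - T))
      (max (a l1 - a l2) (a l2 - a l1))) 0 with hL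
  set U : ℝ := min T (a l1 + a l2) with hU
  have hLU : L < U := by
    have h1 := h l1; have h2 := h l2
    rw [hS] at h1 h2
    apply max_lt
    · apply max_lt
      · rw [Finset.sup'_lt_iff]
        intro j _
        have hj := h (j.castSucc.castSucc)
        rw [hS] at hj
        exact lt_min (by linarith [hTj j]) (by linarith)
      · exact max_lt (lt_min (by linarith [hpos l1, hpos l2]) (by linarith [hpos l1, hpos l2]))
          (lt_min (by linarith [hpos l1, hpos l2]) (by linarith [hpos l1, hpos l2]))
    · exact lt_min hTpos (by linarith [hpos l1, hpos l2])
  set B : ℝ := (L + U) / 2 with hB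
  have hL0 : 0 ≤ L := le_max_right _ _
  have hBpos : 0 < B := by rw [hB]; linarith
  have hBT : B < T := by
    have := min_le_left T (a l1 + a l2)
    rw [hB]; linarith [hLU]
  have hB12 : B < a l1 + a l2 := by
    have := min_le_right T (a l1 + a l2)
    rw [hB]; linarith [hLU]
  have hBl : a l1 - a l2 < B := by
    have h1 : a l1 - a l2 ≤ L :=
      le_max_of_le_left (le_max_of_le_right (le_max_left _ _))
    rw [hB]; linarith
  have hBl' : a l2 - a l1 < B := by
    have h1 : a l2 - a l1 ≤ L :=
      le_max_of_le_left (le_max_of_le_right (le_max_right _ _))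
    rw [hB]; linarith
  have hBj : ∀ j : Fin m, 2 * a (j.castSucc.castSucc) - T < B := by
    intro j
    have h1 : 2 * a (j.castSucc.castSucc) - T ≤ L :=
      le_max_of_le_left (le_max_of_le_left (Finset.le_sup' (fun j : Fin m => 2 * a (j.castSucc.castSucc) - T) (Finset.mem_univ j)))
    rw [hB]; linarith
  -- the merged family
  set b : Fin (m + 1) → ℝ := Fin.snoc (fun i : Fin m => a (i.castSucc.castSucc)) B with hb
  have hb_cast : ∀ i : Fin m, b i.castSucc = a (i.castSucc.castSucc) := by
    intro i; rw [hb, Fin.snoc_castSucc]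
  have hb_last : b (Fin.last m) = B := by rw [hb, Fin.snoc_last]
  have hb_pos : ∀ i, 0 < b i := by
    intro i
    refine Fin.lastCases ?_ ?_ i
    · rw [hb_last]; exact hBpos
    · intro j; rw [hb_cast]; exact hpos _
  have hb_sum : ∑ i, b i = T + B := by
    rw [Fin.sum_univ_castSucc b, hb_last, hT]
    congr 1
    exact Finset.sum_congr rfl fun i _ => hb_cast i
  have hb_cond : ∀ j, 2 * b j < ∑ i, b i := by
    intro j
    rw [hb_sum]
    refine Fin.lastCases ?_ ?_ j
    · rw [hb_last]; linarith
    · intro i; rw [hb_cast]; linarith [hBj i]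
  obtain ⟨v, hvnorm, hvsum, hvprop, hvspan⟩ := ih b hb_pos hb_cond
  set w : E3 := v (Fin.last m) with hw
  have hwnorm : ‖w‖ = B := by rw [hw, hvnorm, hb_last]
  have hwne : w ≠ 0 := by
    intro h0
    rw [h0, norm_zero] at hwnorm
    exact hBpos.ne' hwnorm.symm
  -- the split data
  obtain ⟨γ, β, hβ, hsplitp⟩ :=
    split_lemma w (a l1) (a l2) (hpos l1) (hpos l2) (by rw [hwnorm]; linarith)
      (by rw [hwnorm]; linarith) (by rw [hwnorm]; linarith)
  -- choose p avoiding the bad sets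
  have hvne : ∀ i : Fin m, v i.castSucc ≠ 0 := by
    intro i h0
    have := hvnorm i.castSucc
    rw [h0, norm_zero, hb_cast] at this
    exact (hpos _).ne this
  set Bad : Set E3 :=
    (⋃ i : Fin m, {p : E3 | ‖p‖ = 1 ∧ ⟪p, w⟫ = 0 ∧
        ∃ c : ℝ, 0 < c ∧ γ • w + β • p = c • v i.castSucc}) ∪
    (⋃ i : Fin m, {p : E3 | ‖p‖ = 1 ∧ ⟪p, w⟫ = 0 ∧
        ∃ c : ℝ, 0 < c ∧ (1 - γ) • w + (-β) • p = c • v i.castSucc}) with hBad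
  have hBadFin : Bad.Finite := by
    rw [hBad]
    apply Set.Finite.union <;>
      exact Set.finite_iUnion fun i =>
        Set.Subsingleton.finite (bad_subsingleton w (v i.castSucc) hwne (hvne i) _ _
          (by first | exact hβ.ne' | exact (neg_ne_zero.mpr hβ.ne')))
  obtain ⟨p, hpC, hpBad⟩ := ((circle_infinite w hwne).diff hBadFin).nonempty
  obtain ⟨hp1, hpw⟩ := hpC
  obtain ⟨hnx, hny⟩ := hsplitp p hp1 hpw
  set x : E3 := γ • w + β • p with hx
  set y : E3 := (1 - γ) • w - β • p with hy
  have hxy : x + y = w := by rw [hx, hy]; module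
  -- non-proportionality with old vectors
  have hbadx : ∀ i : Fin m, ¬ ∃ c : ℝ, 0 < c ∧ x = c • v i.castSucc := by
    intro i hc
    exact hpBad (Or.inl (Set.mem_iUnion.2 ⟨i, hp1, hpw, hc⟩))
  have hbady : ∀ i : Fin m, ¬ ∃ c : ℝ, 0 < c ∧ y = c • v i.castSucc := by
    intro i hc
    refine hpBad (Or.inr (Set.mem_iUnion.2 ⟨i, hp1, hpw, ?_⟩))
    obtain ⟨c, hc0, hce⟩ := hc
    exact ⟨c, hc0, by rw [← hce, hy]; module⟩
  have hxv : ∀ i : Fin m, ¬ PosProportional x (v i.castSucc) ∧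
      ¬ PosProportional (v i.castSucc) x := by
    intro i
    constructor
    · rintro ⟨c, hc, he⟩; exact hbadx i ⟨c, hc, he⟩
    · rintro ⟨c, hc, he⟩
      exact hbadx i ⟨c⁻¹, inv_pos.2 hc, by rw [he, smul_smul, inv_mul_cancel₀ hc.ne', one_smul]⟩
  have hyv : ∀ i : Fin m, ¬ PosProportional y (v i.castSucc) ∧
      ¬ PosProportional (v i.castSucc) y := by
    intro i
    constructor
    · rintro ⟨c, hc, he⟩; exact hbady i ⟨c, hc, he⟩
    · rintro ⟨c, hc, he⟩
      exact hbady i ⟨c⁻¹, inv_pos.2 hc, by rw [he, smul_smul, inv_mul_cancel₀ hc.ne', one_smul]⟩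
  -- inner products with p
  have hwp : ⟪w, p⟫ = 0 := by rw [real_inner_comm]; exact hpw
  have hpp : ⟪p, p⟫ = 1 := by
    have := real_inner_self_eq_norm_sq p
    rw [hp1] at this; simpa using this
  have hipx : ⟪x, p⟫ = β := by
    rw [hx, inner_add_left, real_inner_smul_left, real_inner_smul_left, hwp, hpp]; ring
  have hipy : ⟪y, p⟫ = -β := by
    rw [hy, inner_sub_left, real_inner_smul_left, real_inner_smul_left, hwp, hpp]; ring
  have hxyprop : ¬ PosProportional x y ∧ ¬ PosProportional y x :=
    ⟨not_posProp_of_inner x y p (by rw [hipx]; exact hβ) (by rw [hipy]; linarith),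
     not_posProp_of_inner' x y p (by rw [hipx]; exact hβ) (by rw [hipy]; linarith)⟩
  -- the new family
  set v' : Fin (m + 2) → E3 := Fin.snoc (Fin.snoc (fun i : Fin m => v i.castSucc) x) y with hv'
  have hv'_cast : ∀ i : Fin m, v' (i.castSucc.castSucc) = v i.castSucc := by
    intro i; rw [hv', Fin.snoc_castSucc, Fin.snoc_castSucc]
  have hv'_l1 : v' l1 = x := by rw [hv', hl1, Fin.snoc_castSucc, Fin.snoc_last]
  have hv'_l2 : v' l2 = y := by rw [hv', hl2, Fin.snoc_last]
  refine ⟨v', ?_, ?_, ?_, ?_⟩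
  · -- norms
    intro i
    refine Fin.lastCases ?_ ?_ i
    · rw [show Fin.last (m + 1) = l2 from rfl, hv'_l2, hny]
    · intro j
      refine Fin.lastCases ?_ ?_ j
      · rw [show (Fin.last m).castSucc = l1 from rfl, hv'_l1, hnx]
      · intro k
        rw [hv'_cast, hvnorm, hb_cast]
  · -- sum
    rw [Fin.sum_univ_castSucc v', Fin.sum_univ_castSucc (fun i : Fin (m + 1) => v' i.castSucc)]
    have e1 : ∀ i : Fin m, v' (i.castSucc.castSucc) = v i.castSucc := hv'_cast
    rw [Finset.sum_congr rfl fun i _ => e1 i]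
    rw [show v' ((Fin.last m).castSucc) = x from hv'_l1,
      show v' (Fin.last (m + 1)) = y from hv'_l2, add_assoc, hxy]
    rw [← Fin.sum_univ_castSucc v]
    exact hvsum
  · -- pairwise non-proportional
    intro i j hij
    revert hij
    refine Fin.lastCases ?_ (fun i' => ?_) i
    · refine Fin.lastCases ?_ (fun j' => ?_) j
      · intro hij; exact absurd rfl hij
      · refine Fin.lastCases ?_ (fun j'' => ?_) j'
        · intro _
          rw [hv'_l2, hv'_l1]
          exact hxyprop.2
        · intro _
          rw [hv'_l2, hv'_cast]
          exact (hyv j'').1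
    · refine Fin.lastCases ?_ (fun i'' => ?_) i'
      · refine Fin.lastCases ?_ (fun j' => ?_) j
        · intro _
          rw [hv'_l1, hv'_l2]
          exact hxyprop.1
        · refine Fin.lastCases ?_ (fun j'' => ?_) j'
          · intro hij; exact absurd rfl hij
          · intro _
            rw [hv'_l1, hv'_cast]
            exact (hxv j'').1
      · refine Fin.lastCases ?_ (fun j' => ?_) j
        · intro _
          rw [hv'_cast, hv'_l2]
          exact (hyv i'').2
        · refine Fin.lastCases ?_ (fun j'' => ?_) j'
          · intro _
            rw [hv'_cast, hv'_l1]
            exact (hxv i'').2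
          · intro hij
            rw [hv'_cast, hv'_cast]
            exact hvprop _ _ fun hc => hij (congrArg Fin.castSucc hc)
  · -- spanning
    rw [eq_top_iff, ← hvspan]
    apply Submodule.span_le.mpr
    rintro _ ⟨k, rfl⟩
    refine Fin.lastCases ?_ ?_ k
    · rw [← hw, ← hxy]
      exact Submodule.add_mem _
        (Submodule.subset_span ⟨l1, hv'_l1⟩) (Submodule.subset_span ⟨l2, hv'_l2⟩)
    · intro i
      exact Submodule.subset_span ⟨i.castSucc.castSucc, hv'_cast i⟩

lemma exists_of_cond : ∀ n : ℕ, 4 ≤ n → ∀ a : Fin n → ℝ, (∀ i, 0 < a i) →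
    (∀ j, 2 * a j < ∑ i, a i) →
    ∃ v : Fin n → E3, (∀ i, ‖v i‖ = a i) ∧ (∑ i, v i) = 0 ∧
      (∀ i j, i ≠ j → ¬ PosProportional (v i) (v j)) ∧
      Submodule.span ℝ (Set.range v) = ⊤ := by
  intro n hn
  induction n, hn using Nat.le_induction with
  | base => exact base4
  | succ n hn ih =>
    obtain ⟨m, rfl⟩ : ∃ m, n = m + 1 := ⟨n - 1, by omega⟩
    exact step_lemma m (by omega) ih

end

/-- **Vector form of the main theorem.**  Given `n ≥ 4` reals
`A₁ ≥ A₂ ≥ … ≥ Aₙ > 0`, there is a fully equilibrated family of vectors in `ℝ³`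
with these norms (sum zero, no two positively proportional, spanning `ℝ³`)
iff `A₁ < A₂ + ⋯ + Aₙ`. -/
theorem exists_fully_equilibrated_iff (n : ℕ) (hn : 4 ≤ n) (A : Fin n → ℝ)
    (hpos : ∀ i, 0 < A i) (hsorted : Antitone A) :
    (∃ v : Fin n → EuclideanSpace ℝ (Fin 3),
      (∀ i, ‖v i‖ = A i) ∧
      (∑ i, v i) = 0 ∧
      (∀ i j, i ≠ j → ¬ PosProportional (v i) (v j)) ∧
      Submodule.span ℝ (Set.range v) = ⊤) ↔
    A ⟨0, by omega⟩ < ∑ i ∈ Finset.univ.erase ⟨0, by omega⟩, A i := by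
  set i0 : Fin n := ⟨0, by omega⟩ with hi0
  set i1 : Fin n := ⟨1, by omega⟩ with hi1
  set i2 : Fin n := ⟨2, by omega⟩ with hi2
  have h01 : i1 ≠ i0 := by simp [hi0, hi1, Fin.ext_iff]
  have h02 : i2 ≠ i0 := by simp [hi0, hi2, Fin.ext_iff]
  have h12 : i2 ≠ i1 := by simp [hi1, hi2, Fin.ext_iff]
  constructor
  · rintro ⟨v, hnorm, hsum, hprop, -⟩
    have hv0 : v i0 = -∑ i ∈ Finset.univ.erase i0, v i := by
      have := Finset.add_sum_erase Finset.univ v (Finset.mem_univ i0)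
      rw [hsum] at this
      linear_combination (norm := module) this
    have hm1 : i1 ∈ Finset.univ.erase i0 := Finset.mem_erase.mpr ⟨h01, Finset.mem_univ _⟩
    have hm2 : i2 ∈ (Finset.univ.erase i0).erase i1 :=
      Finset.mem_erase.mpr ⟨h12, Finset.mem_erase.mpr ⟨h02, Finset.mem_univ _⟩⟩
    set S2 : Finset (Fin n) := ((Finset.univ.erase i0).erase i1).erase i2 with hS2
    have hdecomp : ∀ f : Fin n → ℝ, ∑ i ∈ Finset.univ.erase i0, f i
        = f i1 + f i2 + ∑ i ∈ S2, f i := by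
      intro f
      rw [← Finset.add_sum_erase _ f hm1, ← Finset.add_sum_erase _ f hm2, hS2]
      ring
    have hdecompv : ∑ i ∈ Finset.univ.erase i0, v i
        = (v i1 + v i2) + ∑ i ∈ S2, v i := by
      rw [← Finset.add_sum_erase _ v hm1, ← Finset.add_sum_erase _ v hm2, hS2]
      abel
    -- strict triangle inequality for v i1, v i2
    have hne1 : v i1 ≠ 0 := by
      rw [← norm_ne_zero_iff, hnorm]; exact (hpos i1).ne'
    have hne2 : v i2 ≠ 0 := by
      rw [← norm_ne_zero_iff, hnorm]; exact (hpos i2).ne'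
    have hstrict : ‖v i1 + v i2‖ < ‖v i1‖ + ‖v i2‖ := by
      rcases lt_or_eq_of_le (norm_add_le (v i1) (v i2)) with h | h
      · exact h
      · exfalso
        have hsr : SameRay ℝ (v i1) (v i2) := sameRay_iff_norm_add.mpr h
        obtain ⟨r₁, r₂, hr₁, hr₂, hre⟩ := hsr.exists_pos hne1 hne2
        refine hprop i1 i2 (fun hc => h12 hc.symm) ⟨r₁⁻¹ * r₂, by positivity, ?_⟩
        rw [mul_smul, ← hre, smul_smul, inv_mul_cancel₀ hr₁.ne', one_smul]
    have hbound : A i0 ≤ ‖v i1 + v i2‖ + ∑ i ∈ S2, ‖v i‖ := by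
      calc A i0 = ‖v i0‖ := (hnorm i0).symm
        _ = ‖∑ i ∈ Finset.univ.erase i0, v i‖ := by rw [hv0, norm_neg]
        _ = ‖(v i1 + v i2) + ∑ i ∈ S2, v i‖ := by rw [hdecompv]
        _ ≤ ‖v i1 + v i2‖ + ‖∑ i ∈ S2, v i‖ := norm_add_le _ _
        _ ≤ ‖v i1 + v i2‖ + ∑ i ∈ S2, ‖v i‖ := by
            gcongr
            exact norm_sum_le _ _
    have hfin : ∑ i ∈ Finset.univ.erase i0, A i
        = A i1 + A i2 + ∑ i ∈ S2, A i := hdecomp A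
    have hnormsum : ∑ i ∈ S2, ‖v i‖ = ∑ i ∈ S2, A i :=
      Finset.sum_congr rfl fun i _ => hnorm i
    rw [hfin]
    rw [hnormsum] at hbound
    calc A i0 ≤ ‖v i1 + v i2‖ + ∑ i ∈ S2, A i := hbound
      _ < ‖v i1‖ + ‖v i2‖ + ∑ i ∈ S2, A i := by linarith
      _ = A i1 + A i2 + ∑ i ∈ S2, A i := by rw [hnorm, hnorm]
  · intro hlt
    apply exists_of_cond n hn A hpos
    intro j
    have hSsum : ∑ i, A i = A i0 + ∑ i ∈ Finset.univ.erase i0, A i :=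
      (Finset.add_sum_erase Finset.univ A (Finset.mem_univ i0)).symm
    by_cases hj : j = i0
    · rw [hj, hSsum]; linarith
    · have hj0 : A j ≤ A i0 := hsorted (show i0 ≤ j from Fin.mk_le_of_le_val (Nat.zero_le _))
      have hjm : j ∈ Finset.univ.erase i0 := Finset.mem_erase.mpr ⟨hj, Finset.mem_univ _⟩
      have hrest : 0 < ∑ i ∈ (Finset.univ.erase i0).erase j, A i := by
        apply Finset.sum_pos (fun i _ => hpos i)
        rw [← Finset.card_pos, Finset.card_erase_of_mem hjm,
          Finset.card_erase_of_mem (Finset.mem_univ i0), Finset.card_univ, Fintype.card_fin]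
        omega
      have hAj : A j < ∑ i ∈ Finset.univ.erase i0, A i := by
        rw [← Finset.add_sum_erase _ A hjm]
        linarith
      rw [hSsum]
      linarith
end

section
/- Let n ≥ 2 and let A₁ ≥ A₂ ≥ … ≥ Aₙ > 0 be real numbers. Then there exist vectors v₁, …, vₙ in ℝ² with ‖vᵢ‖ = Aᵢ for all i and v₁ + v₂ + … + vₙ = 0 if and only if A₁ ≤ A₂ + A₃ + … + Aₙ. -/
noncomputable def mk2 (x y : ℝ) : EuclideanSpace ℝ (Fin 2) := WithLp.toLp 2 ![x, y]

lemma mk2_norm (x y : ℝ) : ‖mk2 x y‖ = Real.sqrt (x^2 + y^2) := by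
  simp [mk2, EuclideanSpace.norm_eq, Fin.sum_univ_two, Real.norm_eq_abs, sq_abs]

lemma mk2_add (x y x' y' : ℝ) : mk2 x y + mk2 x' y' = mk2 (x+x') (y+y') := by
  ext i; fin_cases i <;> simp [mk2]

lemma mk2_smul (c x y : ℝ) : c • mk2 x y = mk2 (c*x) (c*y) := by
  ext i; fin_cases i <;> simp [mk2]

lemma mk2_eq_zero (x y : ℝ) (hx : x = 0) (hy : y = 0) : mk2 x y = 0 := by
  subst hx; subst hy
  ext i; fin_cases i <;> simp [mk2]

lemma triangle_dirs (b₁ b₂ b₃ : ℝ) (h₁ : 0 < b₁) (h₂ : 0 ≤ b₂) (h₃ : 0 ≤ b₃)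
    (t₁ : b₁ ≤ b₂ + b₃) (t₂ : b₂ ≤ b₁ + b₃) (t₃ : b₃ ≤ b₁ + b₂) :
    ∃ d₁ d₂ d₃ : EuclideanSpace ℝ (Fin 2), ‖d₁‖ = 1 ∧ ‖d₂‖ = 1 ∧ ‖d₃‖ = 1 ∧
      b₁ • d₁ + b₂ • d₂ + b₃ • d₃ = 0 := by
  have norm_one : ‖mk2 1 0‖ = 1 := by rw [mk2_norm]; norm_num
  rcases eq_or_lt_of_le h₂ with h₂ | h₂
  · -- b₂ = 0, so b₁ = b₃
    have hb : b₁ = b₃ := le_antisymm (by linarith) (by linarith)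
    refine ⟨mk2 1 0, mk2 1 0, mk2 (-1) 0, norm_one, norm_one, ?_, ?_⟩
    · rw [mk2_norm]; norm_num
    · rw [← h₂, zero_smul, add_zero, mk2_smul, mk2_smul, mk2_add]
      exact mk2_eq_zero _ _ (by rw [hb]; ring) (by ring)
  · -- b₂ > 0, law of cosines
    set x : ℝ := (b₃^2 - b₁^2 - b₂^2) / (2*b₁*b₂) with hx
    have hb12 : (0:ℝ) < 2*b₁*b₂ := by positivity
    have hx1 : x ≤ 1 := by
      rw [hx, div_le_one hb12]; nlinarith
    have hxm : -1 ≤ x := by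
      rw [hx, le_div_iff₀ hb12]; nlinarith
    have hy2 : 0 ≤ 1 - x^2 := by nlinarith
    set y : ℝ := Real.sqrt (1 - x^2) with hy
    have hysq : y^2 = 1 - x^2 := Real.sq_sqrt hy2
    have hd2 : ‖mk2 x y‖ = 1 := by
      rw [mk2_norm, hysq]; simp
    have key : b₁^2 + b₂^2 + 2*b₁*b₂*x = b₃^2 := by
      rw [hx]; field_simp; ring
    -- w = b₁ • d₁ + b₂ • d₂
    have hwx : b₁ * 1 + b₂ * x = b₁ + b₂ * x := by ring
    have hwnormsq : (b₁ + b₂*x)^2 + (b₂*y)^2 = b₃^2 := by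
      rw [mul_pow, hysq]; nlinarith [key]
    rcases eq_or_lt_of_le h₃ with h₃0 | h₃0
    · -- b₃ = 0 : w = 0
      refine ⟨mk2 1 0, mk2 x y, mk2 1 0, norm_one, hd2, norm_one, ?_⟩
      rw [← h₃0, zero_smul, add_zero, mk2_smul, mk2_smul, mk2_add]
      have h0 : (b₁ + b₂*x)^2 + (b₂*y)^2 = 0 := by rw [hwnormsq, ← h₃0]; ring
      have e1 : b₁ + b₂*x = 0 := by nlinarith [sq_nonneg (b₁ + b₂*x), sq_nonneg (b₂*y)]
      have e2 : b₂*y = 0 := by nlinarith [sq_nonneg (b₁ + b₂*x), sq_nonneg (b₂*y)]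
      exact mk2_eq_zero _ _ (by simpa using e1) (by simpa using e2)
    · refine ⟨mk2 1 0, mk2 x y, mk2 (-(b₁ + b₂*x)/b₃) (-(b₂*y)/b₃), norm_one, hd2, ?_, ?_⟩
      · rw [mk2_norm]
        rw [div_pow, div_pow, neg_sq, neg_sq, ← add_div, hwnormsq]
        rw [div_self (by positivity)]
        simp
      · rw [mk2_smul, mk2_smul, mk2_smul, mk2_add, mk2_add]
        refine mk2_eq_zero _ _ ?_ ?_ <;> field_simp <;> ring

/-- **Closure criterion for a robot arm.**  Given `n ≥ 2` reals
`A₁ ≥ A₂ ≥ ⋯ ≥ Aₙ > 0`, there exist vectors in `ℝ²` with these norms summing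
to zero iff the largest, `A₁`, is at most the sum of the others. -/
theorem exists_closed_chain_iff (n : ℕ) (hn : 2 ≤ n) (A : Fin n → ℝ)
    (hpos : ∀ i, 0 < A i) (hsorted : Antitone A) :
    (∃ v : Fin n → EuclideanSpace ℝ (Fin 2),
      (∀ i, ‖v i‖ = A i) ∧ (∑ i, v i) = 0) ↔
    A ⟨0, by omega⟩ ≤ ∑ i ∈ Finset.univ.erase ⟨0, by omega⟩, A i := by
  set i0 : Fin n := ⟨0, by omega⟩ with hi0
  constructor
  · rintro ⟨v, hnorm, hsum⟩
    have h0 : v i0 + ∑ i ∈ Finset.univ.erase i0, v i = 0 := by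
      rw [Finset.add_sum_erase _ _ (Finset.mem_univ i0)]; exact hsum
    have : v i0 = -∑ i ∈ Finset.univ.erase i0, v i := eq_neg_of_add_eq_zero_left h0
    calc A i0 = ‖v i0‖ := (hnorm i0).symm
      _ = ‖∑ i ∈ Finset.univ.erase i0, v i‖ := by rw [this, norm_neg]
      _ ≤ ∑ i ∈ Finset.univ.erase i0, ‖v i‖ := norm_sum_le _ _
      _ = ∑ i ∈ Finset.univ.erase i0, A i := by
          exact Finset.sum_congr rfl fun i _ => hnorm i
  · intro hmain
    set R : ℝ := ∑ i ∈ Finset.univ.erase i0, A i with hR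
    have hRpos : 0 < R := by
      have h1 : (⟨1, by omega⟩ : Fin n) ∈ Finset.univ.erase i0 := by
        simp [hi0, Fin.ext_iff]
      exact Finset.sum_pos' (fun i _ => (hpos i).le) ⟨_, h1, hpos _⟩
    set P : ℕ → ℝ := fun k =>
      ∑ i ∈ Finset.univ.filter (fun i : Fin n => 1 ≤ i.1 ∧ i.1 < k), A i with hP
    have hPn : P n = R := by
      rw [hP, hR]
      apply Finset.sum_congr _ (fun _ _ => rfl)
      ext i
      simp [hi0, Fin.ext_iff, i.2]
      omega
    set tgt : ℝ := (R - A i0) / 2 with htgt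
    set T : Finset ℕ := (Finset.range (n+1)).filter (fun k => tgt ≤ P k) with hT
    have hnT : n ∈ T := by
      rw [hT, Finset.mem_filter, Finset.mem_range]
      exact ⟨by omega, by rw [hPn, htgt]; linarith [hpos i0]⟩
    set k : ℕ := T.min' ⟨n, hnT⟩ with hk
    have hkT : k ∈ T := Finset.min'_mem _ _
    have hkn : k ≤ n := by
      have := (Finset.mem_filter.mp hkT).1
      simp only [Finset.mem_range] at this; omega
    have hklow : tgt ≤ P k := (Finset.mem_filter.mp hkT).2
    -- monotonicity facts about P
    have hP0 : P 0 = 0 := by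
      rw [hP]
      apply Finset.sum_eq_zero
      intro i hi
      simp only [Finset.mem_filter] at hi
      omega
    have hP1 : P 1 = 0 := by
      rw [hP]
      apply Finset.sum_eq_zero
      intro i hi
      simp only [Finset.mem_filter] at hi
      omega
    have hPstep : ∀ m, 1 ≤ m → (hm : m < n) → P (m+1) = P m + A ⟨m, hm⟩ := by
      intro m h1m hm
      simp only [hP]
      have : Finset.univ.filter (fun i : Fin n => 1 ≤ i.1 ∧ i.1 < m+1)
          = insert ⟨m, hm⟩ (Finset.univ.filter (fun i : Fin n => 1 ≤ i.1 ∧ i.1 < m)) := by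
        ext i
        simp [Fin.ext_iff]
        omega
      rw [this, Finset.sum_insert (by simp)]
      ring
    have hkhigh : P k ≤ (R + A i0) / 2 := by
      match hk' : k with
      | 0 => rw [hP0]; linarith [hpos i0]
      | 1 => rw [hP1]; linarith [hpos i0]
      | (m+1) =>
        have hm1 : 1 ≤ m ∨ m = 0 := by omega
        rcases hm1 with hm1 | hm1
        · have hmn : m < n := by omega
          have hmem : m ∉ T := by
            intro hmT
            have := Finset.min'_le T m hmT
            omega
          have hmlt : ¬ tgt ≤ P m := by
            intro h
            exact hmem (by simp only [hT, Finset.mem_filter, Finset.mem_range]; exact ⟨by omega, h⟩)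
          push_neg at hmlt
          have hA : A ⟨m, hmn⟩ ≤ A i0 := hsorted (by simp [hi0, Fin.le_def])
          rw [hPstep m hm1 hmn]
          rw [htgt] at hmlt
          linarith
        · subst hm1; rw [hP1]; linarith [hpos i0]
    -- triangle side lengths
    set b₂ : ℝ := P k with hb2
    set b₃ : ℝ := R - b₂ with hb3
    have ht1 : A i0 ≤ b₂ + b₃ := by rw [hb3]; linarith
    have ht2 : b₂ ≤ A i0 + b₃ := by rw [hb3]; linarith
    have ht3 : b₃ ≤ A i0 + b₂ := by rw [hb3, htgt] at *; linarith
    have hb2nn : 0 ≤ b₂ := by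
      rw [hb2, hP]
      exact Finset.sum_nonneg fun i _ => (hpos i).le
    have hb3nn : 0 ≤ b₃ := by linarith
    obtain ⟨d₁, d₂, d₃, hd1, hd2, hd3, hdsum⟩ :=
      triangle_dirs (A i0) b₂ b₃ (hpos i0) hb2nn hb3nn ht1 ht2 ht3
    refine ⟨fun i => if i.1 = 0 then A i • d₁ else if i.1 < k then A i • d₂ else A i • d₃,
      ?_, ?_⟩
    · intro i
      simp only
      split_ifs with h1 h2
      · rw [norm_smul, hd1, Real.norm_eq_abs, abs_of_pos (hpos i), mul_one]
      · rw [norm_smul, hd2, Real.norm_eq_abs, abs_of_pos (hpos i), mul_one]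
      · rw [norm_smul, hd3, Real.norm_eq_abs, abs_of_pos (hpos i), mul_one]
    · rw [← Finset.add_sum_erase _ _ (Finset.mem_univ i0)]
      have hi00 : (i0.1 = 0) := rfl
      rw [if_pos hi00]
      have hsplit : ∑ i ∈ Finset.univ.erase i0,
          (if i.1 = 0 then A i • d₁ else if i.1 < k then A i • d₂ else A i • d₃)
          = b₂ • d₂ + b₃ • d₃ := by
        have hcongr : ∀ i ∈ Finset.univ.erase i0,
            (if i.1 = 0 then A i • d₁ else if i.1 < k then A i • d₂ else A i • d₃)
            = (if i.1 < k then A i • d₂ else A i • d₃) := by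
          intro i hi
          have : i.1 ≠ 0 := by
            simp [hi0, Fin.ext_iff] at hi
            exact hi
          rw [if_neg this]
        rw [Finset.sum_congr rfl hcongr]
        rw [← Finset.sum_filter_add_sum_filter_not (Finset.univ.erase i0) (fun i => i.1 < k)]
        have e1 : ∑ i ∈ (Finset.univ.erase i0).filter (fun i => i.1 < k),
            (if i.1 < k then A i • d₂ else A i • d₃)
            = b₂ • d₂ := by
          rw [Finset.sum_congr rfl (fun i hi => if_pos (Finset.mem_filter.mp hi).2)]
          rw [hb2, hP, ← Finset.sum_smul]
          congr 1
          apply Finset.sum_congr _ (fun _ _ => rfl)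
          ext i
          simp [hi0, Fin.ext_iff]
          omega
        have e2 : ∑ i ∈ (Finset.univ.erase i0).filter (fun i => ¬ i.1 < k),
            (if i.1 < k then A i • d₂ else A i • d₃)
            = b₃ • d₃ := by
          rw [Finset.sum_congr rfl (fun i hi => if_neg (Finset.mem_filter.mp hi).2)]
          rw [← Finset.sum_smul]
          congr 1
          have hsum2 : (∑ i ∈ (Finset.univ.erase i0).filter (fun i => i.1 < k), A i)
              + (∑ i ∈ (Finset.univ.erase i0).filter (fun i => ¬ i.1 < k), A i) = R := by
            rw [Finset.sum_filter_add_sum_filter_not, hR]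
          have hfirst : (∑ i ∈ (Finset.univ.erase i0).filter (fun i => i.1 < k), A i) = b₂ := by
            rw [hb2, hP]
            apply Finset.sum_congr _ (fun _ _ => rfl)
            ext i
            simp [hi0, Fin.ext_iff]
            omega
          rw [hb3]
          linarith [hsum2, hfirst]
        rw [e1, e2]
      rw [hsplit, ← add_assoc]
      exact hdsum
end

section
/- Let n ≥ 3 and let A₁ ≥ A₂ ≥ … ≥ Aₙ > 0 be real numbers with A₁ < A₂ + … + Aₙ. Then there exist vectors v₁, …, vₙ in ℝ² with ‖vᵢ‖ = Aᵢ for all i, with v₁ + … + vₙ = 0, and such that no two of the vectors are positively proportional (no vᵢ equals c • vⱼ for c > 0 and i ≠ j). -/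
lemma construct_aux {n : ℕ} (hn : 0 < n) (A β : Fin n → ℝ) (x : ℝ) (hx : 0 < x)
    (hA : ∀ i, 0 < A i)
    (hβpos : ∀ i, 0 < β i)
    (hsin : ∀ i, Real.sin (β i) = A i * x)
    (hsum : ∑ i, β i = Real.pi) :
    ∃ v : Fin n → EuclideanSpace ℝ (Fin 2),
      (∀ i, ‖v i‖ = A i) ∧ (∑ i, v i) = 0 ∧
      (∀ i j, i ≠ j → ¬ PosProportional (v i) (v j)) := by
  classical
  set b : ℕ → ℝ := fun k => if h : k < n then β ⟨k, h⟩ else 0 with hb_def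
  set T : ℕ → ℝ := fun k => ∑ j ∈ Finset.range k, 2 * b j with hT_def
  have hbnn : ∀ k, 0 ≤ b k := by
    intro k
    simp only [hb_def]
    split
    · exact (hβpos _).le
    · exact le_refl _
  have hbposlt : ∀ k, k < n → 0 < b k := by
    intro k hk
    simp only [hb_def, dif_pos hk]
    exact hβpos _
  have hbval : ∀ i : Fin n, b i.val = β i := by
    intro i
    simp only [hb_def, dif_pos i.isLt]
  have hTsucc : ∀ k, T (k + 1) = T k + 2 * b k := by
    intro k; simp only [hT_def, Finset.sum_range_succ]
  have hT0 : T 0 = 0 := by simp [hT_def]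
  have hTn : T n = 2 * Real.pi := by
    have h1 : ∑ j ∈ Finset.range n, b j = ∑ i : Fin n, β i := by
      rw [← Fin.sum_univ_eq_sum_range]
      exact Finset.sum_congr rfl fun i _ => hbval i
    simp only [hT_def, ← Finset.mul_sum, h1, hsum]
  have hTmono : Monotone T := by
    intro p q hpq
    exact Finset.sum_le_sum_of_subset_of_nonneg (Finset.range_subset_range.2 hpq)
      (fun k _ _ => by have := hbnn k; linarith)
  set μ : ℕ → ℝ := fun k => T k + b k with hμ_def
  set v : Fin n → EuclideanSpace ℝ (Fin 2) := fun i =>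
    (WithLp.equiv 2 (Fin 2 → ℝ)).symm ![A i * (-(Real.sin (μ i.val))), A i * Real.cos (μ i.val)]
    with hv_def
  have hv0 : ∀ i : Fin n, v i 0 = A i * (-(Real.sin (μ i.val))) := fun i => rfl
  have hv1 : ∀ i : Fin n, v i 1 = A i * Real.cos (μ i.val) := fun i => rfl
  have hAx : ∀ i : Fin n, A i = Real.sin (b i.val) / x := by
    intro i
    rw [hbval, hsin]
    field_simp
  -- norms
  have hnorm : ∀ i, ‖v i‖ = A i := by
    intro i
    rw [hv_def]
    rw [EuclideanSpace.norm_eq]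
    simp only [WithLp.equiv_symm_apply, PiLp.toLp_apply, Fin.sum_univ_two, Real.norm_eq_abs, sq_abs,
      Matrix.cons_val_zero, Matrix.cons_val_one, Matrix.head_cons]
    have h1 : (A i * (-(Real.sin (μ i.val)))) ^ 2 + (A i * Real.cos (μ i.val)) ^ 2
        = (A i) ^ 2 := by
      have := Real.sin_sq_add_cos_sq (μ i.val)
      nlinarith [this]
    rw [h1, Real.sqrt_sq (hA i).le]
  -- telescoping sums
  have hsum0 : ∑ k ∈ Finset.range n, Real.sin (b k) * Real.sin (μ k) = 0 := by
    have step : ∀ k : ℕ, Real.sin (b k) * Real.sin (μ k)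
        = -((Real.cos (T (k+1)) - Real.cos (T k)) / 2) := by
      intro k
      rw [hTsucc k]
      have e := Real.cos_sub_cos (T k) (T k + 2 * b k)
      have e1 : (T k + (T k + 2 * b k)) / 2 = T k + b k := by ring
      have e2 : (T k - (T k + 2 * b k)) / 2 = -(b k) := by ring
      rw [e1, e2, Real.sin_neg] at e
      simp only [hμ_def]
      linarith [e]
    calc ∑ k ∈ Finset.range n, Real.sin (b k) * Real.sin (μ k)
        = ∑ k ∈ Finset.range n, -((Real.cos (T (k+1)) - Real.cos (T k)) / 2) :=
          Finset.sum_congr rfl fun k _ => step k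
      _ = -((∑ k ∈ Finset.range n, (Real.cos (T (k+1)) - Real.cos (T k))) / 2) := by
          rw [Finset.sum_neg_distrib, Finset.sum_div]
      _ = 0 := by
          rw [Finset.sum_range_sub (fun k => Real.cos (T k)) n]
          simp [hTn, hT0, Real.cos_two_pi]
  have hsum1 : ∑ k ∈ Finset.range n, Real.sin (b k) * Real.cos (μ k) = 0 := by
    have step : ∀ k : ℕ, Real.sin (b k) * Real.cos (μ k)
        = (Real.sin (T (k+1)) - Real.sin (T k)) / 2 := by
      intro k
      rw [hTsucc k]
      have e := Real.sin_sub_sin (T k + 2 * b k) (T k)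
      have e1 : (T k + 2 * b k - T k) / 2 = b k := by ring
      have e2 : (T k + 2 * b k + T k) / 2 = T k + b k := by ring
      rw [e1, e2] at e
      simp only [hμ_def]
      linarith [e]
    calc ∑ k ∈ Finset.range n, Real.sin (b k) * Real.cos (μ k)
        = ∑ k ∈ Finset.range n, (Real.sin (T (k+1)) - Real.sin (T k)) / 2 :=
          Finset.sum_congr rfl fun k _ => step k
      _ = (∑ k ∈ Finset.range n, (Real.sin (T (k+1)) - Real.sin (T k))) / 2 := by
          rw [Finset.sum_div]
      _ = 0 := by
          rw [Finset.sum_range_sub (fun k => Real.sin (T k)) n]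
          simp [hTn, hT0, Real.sin_two_pi]
  -- sum is zero
  have hzero : (∑ i, v i) = 0 := by
    apply PiLp.ext
    intro j
    have hza : (0 : EuclideanSpace ℝ (Fin 2)) j = 0 := rfl
    rw [hza, WithLp.ofLp_sum, Finset.sum_apply]
    fin_cases j
    · calc ∑ i : Fin n, v i 0
          = ∑ i : Fin n, -(1/x) * (Real.sin (b i.val) * Real.sin (μ i.val)) := by
            refine Finset.sum_congr rfl fun i _ => ?_
            rw [hv0 i, hAx i]
            field_simp
        _ = -(1/x) * ∑ i : Fin n, Real.sin (b i.val) * Real.sin (μ i.val) := by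
            rw [Finset.mul_sum]
        _ = 0 := by
            rw [Fin.sum_univ_eq_sum_range (fun k => Real.sin (b k) * Real.sin (μ k)) n, hsum0,
              mul_zero]
    · calc ∑ i : Fin n, v i 1
          = ∑ i : Fin n, (1/x) * (Real.sin (b i.val) * Real.cos (μ i.val)) := by
            refine Finset.sum_congr rfl fun i _ => ?_
            rw [hv1 i, hAx i]
            field_simp
        _ = (1/x) * ∑ i : Fin n, Real.sin (b i.val) * Real.cos (μ i.val) := by
            rw [Finset.mul_sum]
        _ = 0 := by
            rw [Fin.sum_univ_eq_sum_range (fun k => Real.sin (b k) * Real.cos (μ k)) n, hsum1,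
              mul_zero]
  -- distinct directions bound
  have key : ∀ p q : ℕ, p < q → q < n → 0 < μ q - μ p ∧ μ q - μ p < 2 * Real.pi := by
    intro p q hpq hq
    have hp : p < n := lt_trans hpq hq
    have h1 : μ p < T (p + 1) := by
      rw [hTsucc p]
      simp only [hμ_def]
      linarith [hbposlt p hp]
    have h2 : T (p + 1) ≤ T q := hTmono hpq
    have h3 : T q ≤ μ q := by simp only [hμ_def]; linarith [hbnn q]
    have h4 : μ q < T (q + 1) := by
      rw [hTsucc q]
      simp only [hμ_def]
      linarith [hbposlt q hq]
    have h5 : T (q + 1) ≤ T n := hTmono hq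
    have h6 : 0 ≤ T p := hT0 ▸ hTmono (Nat.zero_le p)
    have h7 : T p < μ p := by simp only [hμ_def]; linarith [hbposlt p hp]
    rw [hTn] at h5
    constructor <;> linarith
  refine ⟨v, hnorm, hzero, ?_⟩
  rintro i j hij ⟨c, hc, hvij⟩
  have hAicj : A i = c * A j := by
    have h := hnorm i
    rw [hvij, norm_smul, Real.norm_eq_abs, abs_of_pos hc, hnorm j] at h
    linarith
  have h0 : v i 0 = c * v j 0 := by rw [hvij]; rfl
  have h1 : v i 1 = c * v j 1 := by rw [hvij]; rfl
  rw [hv0 i, hv0 j, hAicj] at h0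
  rw [hv1 i, hv1 j, hAicj] at h1
  have hAj : A j ≠ 0 := (hA j).ne'
  have hcne : c ≠ 0 := hc.ne'
  have hca : c * A j ≠ 0 := mul_ne_zero hcne hAj
  have hsineq : Real.sin (μ i.val) = Real.sin (μ j.val) := by
    have h0' : (c * A j) * (-(Real.sin (μ i.val))) = (c * A j) * (-(Real.sin (μ j.val))) := by
      rw [h0]; ring
    have := mul_left_cancel₀ hca h0'
    linarith
  have hcoseq : Real.cos (μ i.val) = Real.cos (μ j.val) := by
    have h1' : (c * A j) * Real.cos (μ i.val) = (c * A j) * Real.cos (μ j.val) := by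
      rw [h1]; ring
    exact mul_left_cancel₀ hca h1'
  have hangle : ((μ i.val : ℝ) : Real.Angle) = ((μ j.val : ℝ) : Real.Angle) :=
    Real.Angle.cos_sin_inj hcoseq hsineq
  obtain ⟨k, hk⟩ := Real.Angle.angle_eq_iff_two_pi_dvd_sub.1 hangle
  have hvalne : i.val ≠ j.val := fun h => hij (Fin.ext h)
  have h2pi : (0 : ℝ) < 2 * Real.pi := by positivity
  rcases lt_or_gt_of_ne hvalne with hlt | hgt
  · obtain ⟨hk1, hk2⟩ := key i.val j.val hlt j.isLt
    have hklt : (k : ℝ) < 0 := by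
      by_contra hge
      push_neg at hge
      have := mul_nonneg h2pi.le hge
      linarith
    have hkgt : (-1 : ℝ) < (k : ℝ) := by
      by_contra hge
      push_neg at hge
      have := mul_le_mul_of_nonneg_left hge h2pi.le
      linarith
    have hZ1 : k < 0 := by exact_mod_cast hklt
    have hZ2 : (-1 : ℤ) < k := by exact_mod_cast hkgt
    omega
  · obtain ⟨hk1, hk2⟩ := key j.val i.val hgt i.isLt
    have hkgt : (0 : ℝ) < (k : ℝ) := by
      by_contra hge
      push_neg at hge
      have := mul_nonpos_of_nonneg_of_nonpos h2pi.le hge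
      linarith
    have hklt : (k : ℝ) < 1 := by
      by_contra hge
      push_neg at hge
      have := mul_le_mul_of_nonneg_left hge h2pi.le
      linarith
    have hZ1 : 0 < k := by exact_mod_cast hkgt
    have hZ2 : k < (1 : ℤ) := by exact_mod_cast hklt
    omega

/-- **Edge vectors of a convex cyclic polygon.**  Given `n ≥ 3` reals
`A₁ ≥ ⋯ ≥ Aₙ > 0` with `A₁ < A₂ + ⋯ + Aₙ`, there exist vectors in `ℝ²` with
these norms summing to zero with no two of them positively proportional. -/
theorem exists_equilibrated_planar (n : ℕ) (hn : 3 ≤ n) (A : Fin n → ℝ)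
    (hpos : ∀ i, 0 < A i) (hsorted : Antitone A)
    (hlt : A ⟨0, by omega⟩ < ∑ i ∈ Finset.univ.erase ⟨0, by omega⟩, A i) :
    ∃ v : Fin n → EuclideanSpace ℝ (Fin 2),
      (∀ i, ‖v i‖ = A i) ∧
      (∑ i, v i) = 0 ∧
      (∀ i j, i ≠ j → ¬ PosProportional (v i) (v j)) := by
  classical
  have hn0 : 0 < n := by omega
  set z : Fin n := ⟨0, by omega⟩ with hz_def
  set a : ℝ := A z with ha_def
  have ha : 0 < a := hpos z
  have hAle : ∀ i, A i ≤ a := fun i => hsorted (by simp [hz_def, Fin.le_def])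
  set S : ℝ := ∑ i ∈ Finset.univ.erase z, A i with hS_def
  have haS : a < S := hlt
  have hS : 0 < S := lt_trans ha haS
  have hxA1 : ∀ {t : ℝ}, 0 ≤ t → t ≤ 1/a → ∀ i : Fin n, A i * t ≤ 1 := by
    intro t ht ht1 i
    calc A i * t ≤ a * (1/a) := mul_le_mul (hAle i) ht1 ht ha.le
      _ = 1 := by field_simp
  have hf_cont : Continuous (fun t : ℝ => ∑ i : Fin n, Real.arcsin (A i * t)) :=
    continuous_finset_sum _ fun i _ =>
      Real.continuous_arcsin.comp (continuous_const.mul continuous_id)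
  have hbase : ∀ (x : ℝ), 0 < x → x ≤ 1/a → ∀ i : Fin n,
      Real.sin (Real.arcsin (A i * x)) = A i * x := by
    intro x hx hx1 i
    exact Real.sin_arcsin (by nlinarith [hpos i]) (hxA1 hx.le hx1 i)
  by_cases hc : Real.pi ≤ ∑ i : Fin n, Real.arcsin (A i * (1/a))
  · -- center of circle inside polygon
    have hIV := intermediate_value_Icc (by positivity : (0:ℝ) ≤ 1/a) hf_cont.continuousOn
    have hf0 : (fun t : ℝ => ∑ i : Fin n, Real.arcsin (A i * t)) 0 = 0 := by
      simp [Real.arcsin_zero]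
    have hmem : Real.pi ∈ Set.Icc ((fun t : ℝ => ∑ i : Fin n, Real.arcsin (A i * t)) 0)
        ((fun t : ℝ => ∑ i : Fin n, Real.arcsin (A i * t)) (1/a)) := by
      rw [hf0]
      exact ⟨Real.pi_pos.le, hc⟩
    obtain ⟨x, hxIcc, hfx⟩ := hIV hmem
    simp only at hfx
    have hxpos : 0 < x := by
      rcases hxIcc.1.lt_or_eq with hlt' | heq
      · exact hlt'
      · exfalso
        rw [← heq] at hfx
        simp [Real.arcsin_zero] at hfx
        linarith [Real.pi_pos, hfx]
    exact construct_aux hn0 A (fun i => Real.arcsin (A i * x)) x hxpos hpos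
      (fun i => Real.arcsin_pos.2 (mul_pos (hpos i) hxpos))
      (fun i => hbase x hxpos hxIcc.2 i)
      hfx
  · -- center of circle outside polygon
    push_neg at hc
    set x₀ : ℝ := min (1/a) (min (1/S) (Real.sqrt ((S - a)/S^3))) with hx0_def
    have hsqpos : 0 < (S - a)/S^3 := div_pos (by linarith) (by positivity)
    have hx₀pos : 0 < x₀ :=
      lt_min (by positivity) (lt_min (by positivity) (Real.sqrt_pos.2 hsqpos))
    have hx₀a : x₀ ≤ 1/a := min_le_left _ _
    have hx₀S : S * x₀ ≤ 1 := by
      have h1 : x₀ ≤ 1/S := (min_le_right _ _).trans (min_le_left _ _)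
      calc S * x₀ ≤ S * (1/S) := mul_le_mul_of_nonneg_left h1 hS.le
        _ = 1 := by field_simp
    have hx₀sq : x₀^2 * S^3 ≤ S - a := by
      have h1 : x₀ ≤ Real.sqrt ((S - a)/S^3) := (min_le_right _ _).trans (min_le_right _ _)
      have h2 : x₀^2 ≤ (S - a)/S^3 := by
        have hs := Real.sq_sqrt hsqpos.le
        nlinarith [h1, hx₀pos, Real.sqrt_nonneg ((S - a)/S^3)]
      calc x₀^2 * S^3 ≤ ((S - a)/S^3) * S^3 := mul_le_mul_of_nonneg_right h2 (by positivity)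
        _ = S - a := by field_simp
    have hsinSx : a * x₀ < Real.sin (S * x₀) := by
      have h3 := Real.sin_gt_sub_cube (by positivity : (0:ℝ) < S * x₀)
      nlinarith [mul_le_mul_of_nonneg_right hx₀sq hx₀pos.le,
        mul_pos (sub_pos.2 haS) hx₀pos]
    have harc : Real.arcsin (a * x₀) < S * x₀ := by
      have hmem1 : a * x₀ ∈ Set.Icc (-1:ℝ) 1 :=
        ⟨by nlinarith, le_of_lt (lt_of_lt_of_le hsinSx (Real.sin_le_one _))⟩
      have hmem2 : Real.sin (S * x₀) ∈ Set.Icc (-1:ℝ) 1 :=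
        ⟨Real.neg_one_le_sin _, Real.sin_le_one _⟩
      have hmono := Real.strictMonoOn_arcsin hmem1 hmem2 hsinSx
      rwa [Real.arcsin_sin (by nlinarith [Real.pi_pos])
        (by nlinarith [Real.pi_gt_three])] at hmono
    set h : ℝ → ℝ := fun t =>
      (∑ i ∈ Finset.univ.erase z, Real.arcsin (A i * t)) - Real.arcsin (a * t) with hh_def
    have hh_cont : Continuous h :=
      (continuous_finset_sum _ fun i _ =>
        Real.continuous_arcsin.comp (continuous_const.mul continuous_id)).sub
        (Real.continuous_arcsin.comp (continuous_const.mul continuous_id))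
    have hhx₀ : 0 < h x₀ := by
      have hterm : ∀ i ∈ Finset.univ.erase z, A i * x₀ ≤ Real.arcsin (A i * x₀) := by
        intro i _
        have hle1 : A i * x₀ ≤ 1 := hxA1 hx₀pos.le hx₀a i
        have hge0 : (0:ℝ) ≤ A i * x₀ := by nlinarith [hpos i]
        have h0 : 0 ≤ Real.arcsin (A i * x₀) := Real.arcsin_nonneg.2 hge0
        calc A i * x₀ = Real.sin (Real.arcsin (A i * x₀)) :=
              (Real.sin_arcsin (by linarith) hle1).symm
          _ ≤ Real.arcsin (A i * x₀) := Real.sin_le h0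
      have hsum_ge : S * x₀ ≤ ∑ i ∈ Finset.univ.erase z, Real.arcsin (A i * x₀) := by
        rw [hS_def, Finset.sum_mul]
        exact Finset.sum_le_sum hterm
      simp only [hh_def]
      linarith [harc]
    have hh1a : h (1/a) < 0 := by
      have ha1 : a * (1/a) = 1 := by field_simp
      have hsplit : (∑ i : Fin n, Real.arcsin (A i * (1/a)))
          = Real.arcsin (a * (1/a)) + ∑ i ∈ Finset.univ.erase z, Real.arcsin (A i * (1/a)) := by
        rw [ha_def]
        exact (Finset.add_sum_erase _ (fun i => Real.arcsin (A i * (1/a)))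
          (Finset.mem_univ z)).symm
      rw [ha1, Real.arcsin_one] at hsplit
      simp only [hh_def]
      rw [ha1, Real.arcsin_one]
      linarith [hc, hsplit]
    obtain ⟨x, hxIcc, hhx⟩ := intermediate_value_Icc' hx₀a hh_cont.continuousOn
      ⟨le_of_lt hh1a, le_of_lt hhx₀⟩
    have hxpos : 0 < x := lt_of_lt_of_le hx₀pos hxIcc.1
    have hx1a : x ≤ 1/a := hxIcc.2
    set β : Fin n → ℝ := fun i =>
      if i = z then Real.pi - Real.arcsin (a * x) else Real.arcsin (A i * x) with hβ_def
    have hβerase : ∀ i ∈ Finset.univ.erase z, β i = Real.arcsin (A i * x) := by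
      intro i hi
      simp only [hβ_def, if_neg (Finset.ne_of_mem_erase hi)]
    have hβpos : ∀ i, 0 < β i := by
      intro i
      by_cases hi : i = z
      · simp only [hβ_def, if_pos hi]
        linarith [Real.arcsin_le_pi_div_two (a * x), Real.pi_pos]
      · simp only [hβ_def, if_neg hi]
        exact Real.arcsin_pos.2 (mul_pos (hpos i) hxpos)
    have hβsin : ∀ i, Real.sin (β i) = A i * x := by
      intro i
      by_cases hi : i = z
      · simp only [hβ_def, if_pos hi, Real.sin_pi_sub]
        rw [hi]
        exact hbase x hxpos hx1a z
      · simp only [hβ_def, if_neg hi]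
        exact hbase x hxpos hx1a i
    have hβsum : ∑ i, β i = Real.pi := by
      rw [← Finset.add_sum_erase _ β (Finset.mem_univ z)]
      rw [Finset.sum_congr rfl hβerase]
      have hz' : β z = Real.pi - Real.arcsin (a * x) := by simp [hβ_def]
      have hhx' : (∑ i ∈ Finset.univ.erase z, Real.arcsin (A i * x)) = Real.arcsin (a * x) := by
        have := hhx
        simp only [hh_def] at this
        linarith
      rw [hz', hhx']
      ring
    exact construct_aux hn0 A β x hxpos hpos hβpos hβsin hβsum
end

section
/- Let n ≥ 1 and let A₁ ≥ A₂ ≥ … ≥ Aₙ > 0 be real numbers. Then there is at most one real number R ≥ A₁/2 satisfying ∑ᵢ 2 · arcsin(Aᵢ / (2R)) = 2π. Moreover, if ∑ᵢ 2 · arcsin(Aᵢ / A₁) ≥ 2π, then there exists exactly one such R. -/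
open Real

lemma arcsin_le_pi_div_two_mul {y : ℝ} (h0 : 0 ≤ y) (h1 : y ≤ 1) :
    arcsin y ≤ π / 2 * y := by
  have h := Real.mul_le_sin (Real.arcsin_nonneg.2 h0) (Real.arcsin_le_pi_div_two y)
  rw [Real.sin_arcsin (by linarith) h1] at h
  have hπ := Real.pi_pos
  rw [div_mul_eq_mul_div, div_le_iff₀ hπ] at h
  linarith

/-- **Uniqueness of the closing radius (paper's equation (1)).**
Given `n ≥ 1` reals `A₁ ≥ ⋯ ≥ Aₙ > 0`, there is at most one `R ≥ A₁/2` with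
`∑ᵢ 2 arcsin(Aᵢ/(2R)) = 2π`; and if `∑ᵢ 2 arcsin(Aᵢ/A₁) ≥ 2π`, then exactly
one such `R` exists. -/
theorem closing_radius_unique (n : ℕ) (hn : 1 ≤ n) (A : Fin n → ℝ)
    (hpos : ∀ i, 0 < A i) (hsorted : Antitone A) :
    (∀ R₁ R₂ : ℝ, A ⟨0, by omega⟩ / 2 ≤ R₁ → A ⟨0, by omega⟩ / 2 ≤ R₂ →
      (∑ i, 2 * arcsin (A i / (2 * R₁))) = 2 * π →
      (∑ i, 2 * arcsin (A i / (2 * R₂))) = 2 * π → R₁ = R₂) ∧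
    (2 * π ≤ (∑ i, 2 * arcsin (A i / A ⟨0, by omega⟩)) →
      ∃! R : ℝ, A ⟨0, by omega⟩ / 2 ≤ R ∧
        (∑ i, 2 * arcsin (A i / (2 * R))) = 2 * π) := by
  have hne : Nonempty (Fin n) := ⟨⟨0, by omega⟩⟩
  set i0 : Fin n := ⟨0, by omega⟩ with hi0
  have hA0 : 0 < A i0 := hpos i0
  have hle0 : ∀ i, A i ≤ A i0 := fun i => hsorted (by simp [hi0, Fin.le_def])
  set f : ℝ → ℝ := fun R => ∑ i, 2 * arcsin (A i / (2 * R)) with hf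
  -- strict antitonicity on [A i0 / 2, ∞)
  have hanti : ∀ R₁ R₂ : ℝ, A i0 / 2 ≤ R₁ → R₁ < R₂ → f R₂ < f R₁ := by
    intro R₁ R₂ h1 h12
    apply Finset.sum_lt_sum_of_nonempty Finset.univ_nonempty
    intro i _
    have hR1 : 0 < R₁ := lt_of_lt_of_le (by linarith) h1
    have hR2 : 0 < R₂ := hR1.trans h12
    have hAi : 0 < A i := hpos i
    have harg1 : A i / (2 * R₁) ≤ 1 := by
      rw [div_le_one (by linarith)]
      linarith [hle0 i]
    have harg2 : A i / (2 * R₂) ≤ 1 := by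
      rw [div_le_one (by linarith)]
      nlinarith [hle0 i]
    have hlt : A i / (2 * R₂) < A i / (2 * R₁) :=
      div_lt_div_of_pos_left hAi (by linarith) (by linarith)
    have hnn1 : (0:ℝ) ≤ A i / (2 * R₁) := by positivity
    have hnn2 : (0:ℝ) ≤ A i / (2 * R₂) := by positivity
    have := Real.strictMonoOn_arcsin
      (Set.mem_Icc.2 ⟨by linarith, harg2⟩) (Set.mem_Icc.2 ⟨by linarith, harg1⟩) hlt
    linarith
  have huniq : ∀ R₁ R₂ : ℝ, A i0 / 2 ≤ R₁ → A i0 / 2 ≤ R₂ →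
      f R₁ = 2 * π → f R₂ = 2 * π → R₁ = R₂ := by
    intro R₁ R₂ h1 h2 e1 e2
    by_contra hne'
    rcases lt_or_gt_of_ne hne' with h | h
    · have := hanti R₁ R₂ h1 h; rw [e1, e2] at this; exact lt_irrefl _ this
    · have := hanti R₂ R₁ h2 h; rw [e1, e2] at this; exact lt_irrefl _ this
  refine ⟨huniq, ?_⟩
  intro hbig
  -- existence via IVT on [A i0 / 2, n * A i0]
  set M : ℝ := (n : ℝ) * A i0 with hM
  have hn1 : (1 : ℝ) ≤ (n : ℝ) := by exact_mod_cast hn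
  have hMge : A i0 / 2 ≤ M := by nlinarith
  have hcont : ContinuousOn f (Set.Icc (A i0 / 2) M) := by
    apply continuousOn_finset_sum
    intro i _
    have hc : ContinuousOn (fun R : ℝ => A i / (2 * R)) (Set.Icc (A i0 / 2) M) := by
      apply ContinuousOn.div continuousOn_const (by fun_prop)
      intro x hx
      have : 0 < x := lt_of_lt_of_le (by linarith) hx.1
      positivity
    exact (continuous_const.mul Real.continuous_arcsin).comp_continuousOn hc
  have hfhalf : 2 * π ≤ f (A i0 / 2) := by
    have : ∀ i, A i / (2 * (A i0 / 2)) = A i / A i0 := by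
      intro i; congr 1; ring
    calc 2 * π ≤ ∑ i, 2 * arcsin (A i / A i0) := hbig
      _ = f (A i0 / 2) := by simp only [hf, this]
  have hfM : f M ≤ π / 2 * 2 := by
    have hMpos : 0 < M := by nlinarith
    have hterm : ∀ i, 2 * arcsin (A i / (2 * M)) ≤ π * (A i0 / (2 * M)) := by
      intro i
      have hAi := hpos i
      have h0 : 0 ≤ A i / (2 * M) := by positivity
      have h1 : A i / (2 * M) ≤ 1 := by
        rw [div_le_one (by linarith)]
        nlinarith [hle0 i]
      have := arcsin_le_pi_div_two_mul h0 h1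
      have hmono : A i / (2 * M) ≤ A i0 / (2 * M) :=
        (div_le_div_iff_of_pos_right (by linarith)).2 (hle0 i)
      nlinarith [Real.pi_pos]
    calc f M ≤ ∑ _i : Fin n, π * (A i0 / (2 * M)) :=
          Finset.sum_le_sum fun i _ => hterm i
      _ = (n : ℝ) * (π * (A i0 / (2 * M))) := by
          rw [Finset.sum_const, Finset.card_univ, Fintype.card_fin]; ring
      _ = π / 2 := by
          rw [hM]; field_simp
      _ ≤ π / 2 * 2 := by nlinarith [Real.pi_pos]
  have hfM' : f M ≤ 2 * π := by linarith [hfM, Real.pi_pos]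
  have := intermediate_value_Icc' hMge hcont
  have hmem : 2 * π ∈ Set.Icc (f M) (f (A i0 / 2)) := ⟨hfM', hfhalf⟩
  obtain ⟨R, hR, hfR⟩ := this hmem
  exact ⟨R, ⟨hR.1, hfR⟩, fun R' hR' => huniq R' R hR'.1 hR.1 hR'.2 hfR⟩
end

section
/- Let n ≥ 4 and let v₁, …, vₙ be nonzero vectors in ℝ² that sum to zero such that no two of them are positively proportional. Then there exist vectors w₁, …, wₙ in ℝ³ with ‖wᵢ‖ = ‖vᵢ‖ for all i, w₁ + … + wₙ = 0, no two of the wᵢ positively proportional, and span{w₁, …, wₙ} = ℝ³. -/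
/-- Two vectors are parallel (proportional with any nonzero or zero scalar). -/
def Par {V : Type*} [AddCommGroup V] [Module ℝ V] (u v : V) : Prop :=
  ∃ c : ℝ, u = c • v

open Finset

section Comb
variable {n : ℕ} {V : Type*} [AddCommGroup V] [Module ℝ V]
variable (v : Fin n → V) (hne : ∀ i, v i ≠ 0)
    (hprop : ∀ i j, i ≠ j → ¬ PosProportional (v i) (v j))

include hne hprop in
lemma three_par {i j k : Fin n} (hij : i ≠ j) (hik : i ≠ k) (hjk : j ≠ k)
    (h1 : Par (v i) (v k)) (h2 : Par (v j) (v k)) : False := by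
  obtain ⟨a, ha⟩ := h1
  obtain ⟨b, hb⟩ := h2
  have ha0 : a ≠ 0 := by rintro rfl; exact hne i (by simpa using ha)
  have hb0 : b ≠ 0 := by rintro rfl; exact hne j (by simpa using hb)
  have haneg : a < 0 := by
    rcases lt_or_gt_of_ne ha0 with h | h
    · exact h
    · exact absurd ⟨a, h, ha⟩ (hprop i k hik)
  have hbneg : b < 0 := by
    rcases lt_or_gt_of_ne hb0 with h | h
    · exact h
    · exact absurd ⟨b, h, hb⟩ (hprop j k hjk)
  apply hprop i j hij
  refine ⟨a / b, div_pos_of_neg_of_neg haneg hbneg, ?_⟩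
  rw [ha, hb, smul_smul]
  congr 1
  field_simp

include hne hprop in
lemma exists_two_pairs (hn : 4 ≤ n) :
    ∃ i j k l : Fin n, i ≠ j ∧ k ≠ l ∧ i ≠ k ∧ i ≠ l ∧ j ≠ k ∧ j ≠ l ∧
      ¬ Par (v i) (v j) ∧ ¬ Par (v k) (v l) := by
  have hnp : ∃ i j : Fin n, i ≠ j ∧ ¬ Par (v i) (v j) := by
    by_contra h
    push_neg at h
    set a : Fin n := ⟨0, by omega⟩
    set b : Fin n := ⟨1, by omega⟩
    set c : Fin n := ⟨2, by omega⟩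
    have hab : a ≠ b := by simp [a, b, Fin.ext_iff]
    have hac : a ≠ c := by simp [a, c, Fin.ext_iff]
    have hbc : b ≠ c := by simp [b, c, Fin.ext_iff]
    exact three_par v hne hprop hab hac hbc (h a c hac) (h b c hbc)
  obtain ⟨i, j, hij, hPij⟩ := hnp
  have hcard : 1 < (univ \ {i, j} : Finset (Fin n)).card := by
    have h2 : ({i, j} : Finset (Fin n)).card ≤ 2 := Finset.card_insert_le _ _ |>.trans (by simp)
    have := Finset.le_card_sdiff ({i, j} : Finset (Fin n)) univ
    have hc : (univ : Finset (Fin n)).card = n := by simp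
    omega
  obtain ⟨k, hk, l, hl, hkl⟩ := Finset.one_lt_card.mp hcard
  simp only [Finset.mem_sdiff, Finset.mem_univ, true_and, Finset.mem_insert,
    Finset.mem_singleton, not_or] at hk hl
  by_cases hklpar : Par (v k) (v l)
  · have hlk : Par (v l) (v k) := by
      obtain ⟨c, hc⟩ := hklpar
      have hc0 : c ≠ 0 := by rintro rfl; exact hne k (by simpa using hc)
      exact ⟨c⁻¹, by rw [hc, smul_smul, inv_mul_cancel₀ hc0, one_smul]⟩
    refine ⟨i, k, j, l, Ne.symm (by tauto), Ne.symm (by tauto), hij, Ne.symm (by tauto),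
      (by tauto), hkl, ?_, ?_⟩
    · intro h
      exact three_par v hne hprop (Ne.symm hl.1) (Ne.symm hk.1) hkl.symm h hlk
    · intro h
      exact three_par v hne hprop (Ne.symm hk.2) (Ne.symm hl.2) hkl h hklpar
  · exact ⟨i, j, k, l, hij, hkl, Ne.symm hk.1, Ne.symm hl.1, Ne.symm hk.2, Ne.symm hl.2, hPij, hklpar⟩
end Comb

noncomputable def embL : EuclideanSpace ℝ (Fin 2) →ₗ[ℝ] EuclideanSpace ℝ (Fin 3) where
  toFun x := (WithLp.equiv 2 (Fin 3 → ℝ)).symm ![x 0, x 1, 0]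
  map_add' x y := by
    ext m; fin_cases m <;> simp [PiLp.add_apply]
  map_smul' c x := by
    ext m; fin_cases m <;> simp [PiLp.smul_apply]

lemma embL_apply0 (x : EuclideanSpace ℝ (Fin 2)) : embL x 0 = x 0 := rfl
lemma embL_apply1 (x : EuclideanSpace ℝ (Fin 2)) : embL x 1 = x 1 := rfl
lemma embL_apply2 (x : EuclideanSpace ℝ (Fin 2)) : embL x 2 = 0 := rfl

lemma embL_norm (x : EuclideanSpace ℝ (Fin 2)) : ‖embL x‖ = ‖x‖ := by
  rw [EuclideanSpace.norm_eq, EuclideanSpace.norm_eq]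
  rw [Fin.sum_univ_three, Fin.sum_univ_two, embL_apply0, embL_apply1, embL_apply2]
  norm_num

noncomputable def emb : EuclideanSpace ℝ (Fin 2) →ₗᵢ[ℝ] EuclideanSpace ℝ (Fin 3) :=
  ⟨embL, embL_norm⟩

lemma emb_apply0 (x : EuclideanSpace ℝ (Fin 2)) : emb x 0 = x 0 := rfl
lemma emb_apply1 (x : EuclideanSpace ℝ (Fin 2)) : emb x 1 = x 1 := rfl
lemma emb_apply2 (x : EuclideanSpace ℝ (Fin 2)) : emb x 2 = 0 := rfl

noncomputable def e3 : EuclideanSpace ℝ (Fin 3) := EuclideanSpace.single (2 : Fin 3) (1 : ℝ)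

lemma e3_apply2 : e3 2 = 1 := by simp [e3, EuclideanSpace.single_apply]

lemma inner_emb_e3 (x : EuclideanSpace ℝ (Fin 2)) : inner ℝ (emb x) e3 = 0 := by
  simp [e3, EuclideanSpace.inner_single_right, emb_apply2]

lemma norm_emb_add_smul_e3 (x : EuclideanSpace ℝ (Fin 2)) (γ : ℝ) :
    ‖emb x + γ • e3‖ ^ 2 = ‖x‖ ^ 2 + γ ^ 2 := by
  rw [norm_add_sq_real, inner_smul_right, inner_emb_e3, norm_smul, emb.norm_map]
  simp [e3, mul_pow, sq_abs, EuclideanSpace.norm_single]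

lemma norm_comb (u b : EuclideanSpace ℝ (Fin 2)) (hub : inner ℝ u b = 0) (α γ : ℝ) :
    ‖α • u + γ • b‖ ^ 2 = α ^ 2 * ‖u‖ ^ 2 + γ ^ 2 * ‖b‖ ^ 2 := by
  rw [norm_add_sq_real, real_inner_smul_left, real_inner_smul_right, hub, norm_smul, norm_smul]
  simp only [mul_pow, Real.norm_eq_abs, sq_abs]
  ring

set_option maxHeartbeats 1000000 in
/-- **Lifting a planar equilibrated family to a fully equilibrated family in
`ℝ³`.**  If `n ≥ 4` nonzero vectors in `ℝ²` sum to zero with no two positively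
proportional, then there are vectors in `ℝ³` with the same norms which sum to
zero, with no two positively proportional, and which span `ℝ³`. -/
theorem lift_equilibrated_to_R3 (n : ℕ) (hn : 4 ≤ n)
    (v : Fin n → EuclideanSpace ℝ (Fin 2)) (hne : ∀ i, v i ≠ 0)
    (hsum : (∑ i, v i) = 0)
    (hprop : ∀ i j, i ≠ j → ¬ PosProportional (v i) (v j)) :
    ∃ w : Fin n → EuclideanSpace ℝ (Fin 3),
      (∀ i, ‖w i‖ = ‖v i‖) ∧
      (∑ i, w i) = 0 ∧
      (∀ i j, i ≠ j → ¬ PosProportional (w i) (w j)) ∧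
      Submodule.span ℝ (Set.range w) = ⊤ := by
  obtain ⟨i, j, k, l, hij, hkl, hik, hil, hjk, hjl, hPij, hPkl⟩ :=
    exists_two_pairs v hne hprop hn
  -- the lifting data
  set u : EuclideanSpace ℝ (Fin 2) := v i + v j with hu_def
  have hu : u ≠ 0 := by
    intro h
    exact hPij ⟨-1, by rw [neg_one_smul]; exact eq_neg_of_add_eq_zero_left h⟩
  have hu2 : ‖u‖ ^ 2 ≠ 0 := pow_ne_zero _ (norm_ne_zero_iff.mpr hu)
  set t : ℝ := inner ℝ (v i) u / ‖u‖ ^ 2 with ht_def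
  set b : EuclideanSpace ℝ (Fin 2) := v i - t • u with hb_def
  have hub : inner ℝ u b = 0 := by
    simp only [hb_def, inner_sub_right, real_inner_smul_right, ht_def]
    rw [real_inner_self_eq_norm_sq, real_inner_comm]
    field_simp
    simp
  have hvib : v i = t • u + (1 : ℝ) • b := by simp [hb_def]
  have hb : b ≠ 0 := by
    intro h0
    have hvi : v i = t • u := by
      have := sub_eq_zero.mp h0
      simpa [hb_def, sub_eq_zero] using h0
    have ht0 : t ≠ 0 := by
      intro h
      exact hne i (by rw [hvi, h, zero_smul])
    have ht1 : t ≠ 1 := by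
      intro h
      apply hne j
      have h2 := hvi
      rw [h, one_smul, hu_def] at h2
      exact (left_eq_add.mp h2)
    have key : (1 - t) • v i = t • v j := by
      have h2 : v i = t • (v i + v j) := by rw [← hu_def]; exact hvi
      linear_combination (norm := module) h2
    have h1t : (1 - t) ≠ 0 := sub_ne_zero.mpr (Ne.symm ht1)
    exact hPij ⟨(1 - t)⁻¹ * t,
      by rw [mul_smul, ← key, smul_smul, inv_mul_cancel₀ h1t, one_smul]⟩
  set β : ℝ := ‖b‖ with hβ_def
  have hβ : 0 < β := norm_pos_iff.mpr hb
  set c : ℝ := Real.sqrt 2 / 2 with hc_def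
  have hc : 0 < c := by positivity
  have hcs : c ^ 2 + c ^ 2 = 1 := by
    have h2 : Real.sqrt 2 ^ 2 = 2 := Real.sq_sqrt (by norm_num)
    rw [hc_def, div_pow, h2]
    norm_num
  set z : ℝ := c * β with hz_def
  have hz : 0 < z := mul_pos hc hβ
  set p : EuclideanSpace ℝ (Fin 2) := t • u + c • b with hp_def
  set q : EuclideanSpace ℝ (Fin 2) := u - p with hq_def
  have hq : q = (1 - t) • u + (-c) • b := by
    rw [hq_def, hp_def]
    module
  have hvj : v j = (1 - t) • u + (-1 : ℝ) • b := by
    have h2 : v j = u - v i := by rw [hu_def]; abel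
    rw [h2, hvib]
    module
  set W : EuclideanSpace ℝ (Fin 3) := emb p + z • e3 with hW_def
  set W' : EuclideanSpace ℝ (Fin 3) := emb q + (-z) • e3 with hW'_def
  set w : Fin n → EuclideanSpace ℝ (Fin 3) :=
    fun m => if m = i then W else if m = j then W' else emb (v m) with hw_def
  have hwij : ∀ m, m ≠ i → m ≠ j → w m = emb (v m) := by
    intro m h1 h2
    simp [hw_def, h1, h2]
  have hwi : w i = W := by simp [hw_def]
  have hwj : w j = W' := by simp [hw_def, hij.symm]
  -- norms
  have sq_eq : ∀ Y : EuclideanSpace ℝ (Fin 3), ∀ x : EuclideanSpace ℝ (Fin 2),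
      ‖Y‖ ^ 2 = ‖x‖ ^ 2 → ‖Y‖ = ‖x‖ := by
    intro Y x h
    calc ‖Y‖ = Real.sqrt (‖Y‖ ^ 2) := (Real.sqrt_sq (norm_nonneg _)).symm
      _ = ‖x‖ := by rw [h, Real.sqrt_sq (norm_nonneg _)]
  have hnormW : ‖W‖ = ‖v i‖ := by
    apply sq_eq
    rw [hW_def, norm_emb_add_smul_e3, hp_def, norm_comb u b hub, hvib, norm_comb u b hub]
    rw [hz_def]
    linear_combination (β ^ 2) * hcs
  have hnormW' : ‖W'‖ = ‖v j‖ := by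
    apply sq_eq
    rw [hW'_def, norm_emb_add_smul_e3, hq, norm_comb u b hub, hvj, norm_comb u b hub]
    rw [hz_def]
    linear_combination (β ^ 2) * hcs
  -- sum
  have hsum3 : (∑ m, w m) = 0 := by
    have e1 : ∑ m ∈ (univ \ {i, j} : Finset (Fin n)), w m
        = emb (∑ m ∈ (univ \ {i, j} : Finset (Fin n)), v m) := by
      rw [map_sum]
      refine Finset.sum_congr rfl ?_
      intro m hm
      simp only [Finset.mem_sdiff, Finset.mem_univ, true_and, Finset.mem_insert,
        Finset.mem_singleton, not_or] at hm
      exact hwij m hm.1 hm.2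
    have e2 : ∑ m ∈ ({i, j} : Finset (Fin n)), w m = W + W' := by
      rw [Finset.sum_pair hij, hwi, hwj]
    have e3' : W + W' = emb u := by
      rw [hW_def, hW'_def]
      have hpq : p + q = u := by rw [hq_def]; abel
      calc emb p + z • e3 + (emb q + (-z) • e3) = emb p + emb q := by
            rw [neg_smul]; abel
        _ = emb (p + q) := (emb.map_add p q).symm
        _ = emb u := by rw [hpq]
    have e4 : (∑ m ∈ (univ \ {i, j} : Finset (Fin n)), v m) + u = 0 := by
      rw [hu_def, ← Finset.sum_pair hij, Finset.sum_sdiff (Finset.subset_univ _)]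
      exact hsum
    calc (∑ m, w m)
        = ∑ m ∈ (univ \ {i, j} : Finset (Fin n)), w m
          + ∑ m ∈ ({i, j} : Finset (Fin n)), w m :=
          (Finset.sum_sdiff (Finset.subset_univ _)).symm
      _ = emb ((∑ m ∈ (univ \ {i, j} : Finset (Fin n)), v m) + u) := by
          rw [e1, e2, e3', ← emb.map_add]
      _ = 0 := by rw [e4, map_zero]
  -- coordinates
  have hw2 : ∀ m, w m 2 = if m = i then z else if m = j then -z else 0 := by
    intro m
    by_cases h1 : m = i
    · subst h1
      rw [hwi, if_pos rfl, hW_def, PiLp.add_apply, PiLp.smul_apply, emb_apply2, e3_apply2]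
      simp
    · by_cases h2 : m = j
      · subst h2
        rw [hwj, if_neg h1, if_pos rfl, hW'_def, PiLp.add_apply, PiLp.smul_apply, emb_apply2,
          e3_apply2]
        simp
      · rw [hwij m h1 h2, if_neg h1, if_neg h2, emb_apply2]
  -- no two positively proportional
  have hprop3 : ∀ m₁ m₂, m₁ ≠ m₂ → ¬ PosProportional (w m₁) (w m₂) := by
    rintro m₁ m₂ hab ⟨γ, hγ, hEq⟩
    by_cases hpl : (m₁ ≠ i ∧ m₁ ≠ j) ∧ (m₂ ≠ i ∧ m₂ ≠ j)
    · obtain ⟨⟨a1, a2⟩, ⟨b1, b2⟩⟩ := hpl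
      apply hprop m₁ m₂ hab
      refine ⟨γ, hγ, emb.injective ?_⟩
      rw [emb.map_smul]
      rw [hwij m₁ a1 a2, hwij m₂ b1 b2] at hEq
      exact hEq
    · have h2 : w m₁ 2 = γ * w m₂ 2 := by
        rw [hEq, PiLp.smul_apply, smul_eq_mul]
      by_cases h1i : m₁ = i
      · have hA : w m₁ 2 = z := by rw [hw2, if_pos h1i]
        have h2i : m₂ ≠ i := fun h => hab (by rw [h1i, h])
        by_cases h2j : m₂ = j
        · have hB : w m₂ 2 = -z := by rw [hw2, if_neg h2i, if_pos h2j]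
          rw [hA, hB] at h2
          nlinarith [mul_pos hγ hz, hz]
        · have hB : w m₂ 2 = 0 := by rw [hw2, if_neg h2i, if_neg h2j]
          rw [hA, hB] at h2
          nlinarith [hz]
      · by_cases h1j : m₁ = j
        · have hA : w m₁ 2 = -z := by rw [hw2, if_neg h1i, if_pos h1j]
          have h2j : m₂ ≠ j := fun h => hab (by rw [h1j, h])
          by_cases h2i : m₂ = i
          · have hB : w m₂ 2 = z := by rw [hw2, if_pos h2i]
            rw [hA, hB] at h2
            nlinarith [mul_pos hγ hz, hz]
          · have hB : w m₂ 2 = 0 := by rw [hw2, if_neg h2i, if_neg h2j]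
            rw [hA, hB] at h2
            nlinarith [hz]
        · have hA : w m₁ 2 = 0 := by rw [hw2, if_neg h1i, if_neg h1j]
          by_cases h2i : m₂ = i
          · have hB : w m₂ 2 = z := by rw [hw2, if_pos h2i]
            rw [hA, hB] at h2
            nlinarith [mul_pos hγ hz, hz]
          · by_cases h2j : m₂ = j
            · have hB : w m₂ 2 = -z := by rw [hw2, if_neg h2i, if_pos h2j]
              rw [hA, hB] at h2
              nlinarith [mul_pos hγ hz, hz]
            · exact hpl ⟨⟨h1i, h1j⟩, h2i, h2j⟩
  -- span
  have hwk : w k = emb (v k) := hwij k (Ne.symm hik) (Ne.symm hjk)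
  have hwl : w l = emb (v l) := hwij l (Ne.symm hil) (Ne.symm hjl)
  have hind : LinearIndependent ℝ ![v k, v l] := by
    rw [LinearIndependent.pair_iff]
    intro s r hsr
    have hs : s = 0 := by
      by_contra hs
      apply hPkl
      have hkey : s • v k = (-r) • v l := by
        rw [neg_smul]
        exact eq_neg_of_add_eq_zero_left hsr
      exact ⟨s⁻¹ * (-r), by rw [mul_smul, ← hkey, smul_smul, inv_mul_cancel₀ hs, one_smul]⟩
    refine ⟨hs, ?_⟩
    rw [hs, zero_smul, zero_add] at hsr
    exact (smul_eq_zero.mp hsr).resolve_right (hne l)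
  have hspan2 : Submodule.span ℝ (Set.range ![v k, v l]) = ⊤ :=
    hind.span_eq_top_of_card_eq_finrank (by simp [finrank_euclideanSpace_fin])
  set S := Submodule.span ℝ (Set.range w) with hS_def
  have hplane : ∀ x : EuclideanSpace ℝ (Fin 2), emb x ∈ S := by
    intro x
    have hx : x ∈ Submodule.span ℝ ({v k, v l} : Set (EuclideanSpace ℝ (Fin 2))) := by
      have : Set.range ![v k, v l] = ({v k, v l} : Set (EuclideanSpace ℝ (Fin 2))) := by
        simp only [Matrix.range_cons, Matrix.range_empty, Set.union_empty,
          Set.union_singleton]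
        exact Set.pair_comm _ _
      rw [← this, hspan2]
      trivial
    obtain ⟨a, r, har⟩ := Submodule.mem_span_pair.mp hx
    rw [← har, emb.map_add, emb.map_smul, emb.map_smul, ← hwk, ← hwl]
    exact add_mem (S.smul_mem _ (Submodule.subset_span ⟨k, rfl⟩))
      (S.smul_mem _ (Submodule.subset_span ⟨l, rfl⟩))
  have hWmem : W ∈ S := hwi ▸ Submodule.subset_span ⟨i, rfl⟩
  have he3 : e3 ∈ S := by
    have h1 : z • e3 = W - emb p := by rw [hW_def]; abel
    have h2 : z • e3 ∈ S := h1 ▸ sub_mem hWmem (hplane p)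
    have h3 := S.smul_mem z⁻¹ h2
    rwa [smul_smul, inv_mul_cancel₀ (ne_of_gt hz), one_smul] at h3
  have htop : S = ⊤ := by
    rw [eq_top_iff]
    rintro x -
    have hxdecomp : x = emb ((WithLp.equiv 2 (Fin 2 → ℝ)).symm ![x 0, x 1]) + (x 2) • e3 := by
      ext m
      fin_cases m <;>
        simp [PiLp.add_apply, PiLp.smul_apply, emb_apply0, emb_apply1, emb_apply2,
          e3, EuclideanSpace.single_apply]
    rw [hxdecomp]
    exact add_mem (hplane _) (S.smul_mem _ he3)
  -- assemble
  refine ⟨w, ?_, hsum3, hprop3, htop⟩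
  intro m
  by_cases h1 : m = i
  · rw [h1, hwi, hnormW]
  · by_cases h2 : m = j
    · rw [h2, hwj, hnormW']
    · rw [hwij m h1 h2, emb.norm_map]
end
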